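/- arXiv:2007.10704 — 3 statements merged into one kernel-verified Lean document; each statement's English description precedes it below -/
import Mathlib

section
/- Assume the Equitable Δ-Coloring Conjecture holds. Let k ≥ 3 and let n be a positive integer divisible by k with n > k(k−1). Then every family F_1, …, F_{⌊n/(k(k−1))⌋ − 1} of pairwise edge-disjoint K_k-factors of the complete graph K_n can be extended by two further rounds: there exist K_k-factors F and F' of K_n such that F_1, …, F_{⌊n/(k(k−1))⌋ − 1}, F, F' are pairwise edge-disjoint. In particular, by choosing round ⌊n/(k(k−1))⌋ carefully, there always exists a tournament with ⌊n/(k(k−1))⌋ + 1 rounds. -/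
/-- Two vertices lie in a common block of the partition `P`. -/
def SameBlock {n : ℕ} (P : Finpartition (Finset.univ : Finset (Fin n)))
    (u v : Fin n) : Prop :=
  ∃ b ∈ P.parts, u ∈ b ∧ v ∈ b

/-- A `K_k`-factor of `K_n`: a partition of the vertex set into blocks of size `k`. -/
def IsKkFactor {n : ℕ} (k : ℕ) (P : Finpartition (Finset.univ : Finset (Fin n))) : Prop :=
  ∀ b ∈ P.parts, b.card = k

/-- Two rounds (partitions) are edge-disjoint: no two distinct vertices lie in a
common block in both of them. -/
def RoundsEdgeDisjoint {n : ℕ} (P Q : Finpartition (Finset.univ : Finset (Fin n))) : Prop :=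
  ∀ u v : Fin n, u ≠ v → SameBlock P u v → ¬ SameBlock Q u v

/-- A graph is equitably `l`-colorable: there is a proper coloring with `l`
colors whose color classes pairwise differ in size by at most one. -/
def EquitablyColorable {V : Type} (G : SimpleGraph V) (l : ℕ) : Prop :=
  ∃ f : V → Fin l, (∀ u v : V, G.Adj u v → f u ≠ f v) ∧
    ∀ j j' : Fin l, {v | f v = j}.ncard ≤ {v | f v = j'}.ncard + 1

/-- The Equitable Δ-Coloring Conjecture: a connected finite graph `G` with
maximum degree at most `l` has no equitable `l`-coloring iff `G = K_{l+1}`,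
or `l = 2` and `G` is an odd cycle, or `l` is odd and `G = K_{l,l}`. -/
def EDCC : Prop :=
  ∀ (V : Type) [Fintype V] (G : SimpleGraph V) (l : ℕ),
    G.Connected → (∀ v : V, (G.neighborSet v).ncard ≤ l) →
    (¬ EquitablyColorable G l ↔
      Nonempty (G ≃g (⊤ : SimpleGraph (Fin (l + 1)))) ∨
      (l = 2 ∧ ∃ m : ℕ, 3 ≤ m ∧ Odd m ∧ Nonempty (G ≃g SimpleGraph.cycleGraph m)) ∨
      (Odd l ∧ Nonempty (G ≃g completeBipartiteGraph (Fin l) (Fin l))))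



open Finset


lemma balanced_eq_of_sum {ℓ k : ℕ} (c : Fin ℓ → ℕ)
    (hbal : ∀ j j', c j ≤ c j' + 1) (hsum : ∑ j, c j = ℓ * k) : ∀ j, c j = k := by
  intro j
  by_contra hne
  rcases Nat.lt_or_ge (c j) k with h | h
  · have hall : ∀ j', c j' ≤ k := fun j' => by have := hbal j' j; omega
    have : ∑ j', c j' < ∑ _j' : Fin ℓ, k :=
      Finset.sum_lt_sum (fun i _ => hall i) ⟨j, Finset.mem_univ j, h⟩
    simp only [Finset.sum_const, Finset.card_univ, Fintype.card_fin, smul_eq_mul] at this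
    omega
  · have hj : k < c j := by omega
    have hall : ∀ j', k ≤ c j' := fun j' => by have := hbal j j'; omega
    have : ∑ _j' : Fin ℓ, k < ∑ j', c j' :=
      Finset.sum_lt_sum (fun i _ => hall i) ⟨j, Finset.mem_univ j, hj⟩
    simp only [Finset.sum_const, Finset.card_univ, Fintype.card_fin, smul_eq_mul] at this
    omega

lemma exists_perm_image {ℓ : ℕ} (U T : Finset (Fin ℓ)) (h : U.card = T.card) :
    ∃ σ : Equiv.Perm (Fin ℓ), ∀ j, σ j ∈ T ↔ j ∈ U := by
  classical
  have hc : Uᶜ.card = Tᶜ.card := by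
    have := Finset.card_compl (s := U); have := Finset.card_compl (s := T); omega
  let e₁ : {x // x ∈ U} ≃ {x // x ∈ T} := Finset.equivOfCardEq h
  let e₂ : {x // ¬ x ∈ U} ≃ {x // ¬ x ∈ T} :=
    ((Equiv.subtypeEquivRight (fun x => by simp)).symm.trans
        (Finset.equivOfCardEq hc : {x // x ∈ Uᶜ} ≃ {x // x ∈ Tᶜ})).trans
      (Equiv.subtypeEquivRight (fun x => by simp))
  refine ⟨Equiv.subtypeCongr e₁ e₂, fun j => ?_⟩
  unfold Equiv.subtypeCongr
  by_cases hj : j ∈ U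
  · rw [Equiv.trans_apply, Equiv.trans_apply,
      Equiv.sumCompl_symm_apply_of_pos hj]
    simp only [Equiv.sumCongr_apply, Sum.map_inl, Equiv.sumCompl_apply_inl]
    exact ⟨fun _ => hj, fun _ => (e₁ ⟨j, hj⟩).2⟩
  · rw [Equiv.trans_apply, Equiv.trans_apply,
      Equiv.sumCompl_symm_apply_of_neg hj]
    simp only [Equiv.sumCongr_apply, Sum.map_inr, Equiv.sumCompl_apply_inr]
    exact ⟨fun h' => absurd h' (e₂ ⟨j, hj⟩).2, fun h' => absurd h' hj⟩

/-- Key balancing step: two balanced sequences can be aligned so that their sum is balanced. -/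
lemma balance_step {ℓ : ℕ} (hl : 0 < ℓ) (A B : Fin ℓ → ℕ)
    (hA : ∀ j j', A j ≤ A j' + 1) (hB : ∀ j j', B j ≤ B j' + 1) :
    ∃ τ : Equiv.Perm (Fin ℓ), ∀ j j', A j + B (τ j) ≤ A j' + B (τ j') + 1 := by
  classical
  haveI : Nonempty (Fin ℓ) := ⟨⟨0, hl⟩⟩
  obtain ⟨ja, -, hja⟩ := Finset.exists_min_image univ A ⟨⟨0, hl⟩, mem_univ _⟩
  obtain ⟨jb, -, hjb⟩ := Finset.exists_min_image univ B ⟨⟨0, hl⟩, mem_univ _⟩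
  set a := A ja with ha
  set b := B jb with hb
  have hAv : ∀ j, A j = a ∨ A j = a + 1 := fun j => by
    have h1 := hja j (mem_univ j); have h2 := hA j ja; omega
  have hBv : ∀ j, B j = b ∨ B j = b + 1 := fun j => by
    have h1 := hjb j (mem_univ j); have h2 := hB j jb; omega
  set S : Finset (Fin ℓ) := univ.filter (fun j => A j = a) with hS
  set T : Finset (Fin ℓ) := univ.filter (fun j => B j = b + 1) with hT
  have hmemS : ∀ j, j ∈ S ↔ A j = a := fun j => by simp [hS]
  have hmemT : ∀ j, j ∈ T ↔ B j = b + 1 := fun j => by simp [hT]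
  rcases le_or_gt T.card S.card with hle | hlt
  · obtain ⟨U, hUS, hUcard⟩ := Finset.exists_subset_card_eq hle
    obtain ⟨τ, hτ⟩ := exists_perm_image U T hUcard
    refine ⟨τ, fun j j' => ?_⟩
    have e1 : ∀ i, A i + B (τ i) ≤ a + b + 1 ∧ a + b ≤ A i + B (τ i) := by
      intro i
      rcases hAv i with h | h <;> rcases hBv (τ i) with h' | h'
      · omega
      · -- B (τ i) = b+1 → τ i ∈ T → i ∈ U ⊆ S → A i = a; here A i = a anyway
        omega
      · omega
      · -- A i = a + 1 so i ∉ S hence i ∉ U hence τ i ∉ T so B (τ i) = b: contra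
        exfalso
        have hiT : τ i ∈ T := (hmemT _).mpr h'
        have hiU : i ∈ U := (hτ i).mp hiT
        have : A i = a := (hmemS i).mp (hUS hiU)
        omega
    have := e1 j; have := e1 j'; omega
  · have hScard : S.card ≤ T.card := le_of_lt hlt
    obtain ⟨U, hSU, hUcard⟩ := Finset.exists_superset_card_eq hScard
      (le_trans (card_le_univ T) (by simp))
    obtain ⟨τ, hτ⟩ := exists_perm_image U T hUcard
    refine ⟨τ, fun j j' => ?_⟩
    have e1 : ∀ i, A i + B (τ i) ≤ a + b + 2 ∧ a + b + 1 ≤ A i + B (τ i) := by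
      intro i
      rcases hAv i with h | h <;> rcases hBv (τ i) with h' | h'
      · -- A i = a → i ∈ S ⊆ U → τ i ∈ T → B (τ i) = b + 1: contra with h'
        exfalso
        have hiU : i ∈ U := hSU ((hmemS i).mpr h)
        have : B (τ i) = b + 1 := (hmemT _).mp ((hτ i).mpr hiU)
        omega
      · omega
      · omega
      · omega
    have := e1 j; have := e1 j'; omega

/-- Rebalancing: permute each balanced family so the total is balanced. -/
lemma rebalance {α : Type*} [DecidableEq α] {ℓ : ℕ} (hl : 0 < ℓ) (I : Finset α)
    (c : α → Fin ℓ → ℕ) (hc : ∀ i ∈ I, ∀ j j', c i j ≤ c i j' + 1) :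
    ∃ σ : α → Equiv.Perm (Fin ℓ),
      ∀ j j', (∑ i ∈ I, c i (σ i j)) ≤ (∑ i ∈ I, c i (σ i j')) + 1 := by
  classical
  induction I using Finset.induction_on with
  | empty => exact ⟨fun _ => 1, fun j j' => by simp⟩
  | @insert a I ha ih =>
    obtain ⟨σ, hσ⟩ := ih (fun i hi => hc i (mem_insert_of_mem hi))
    set A : Fin ℓ → ℕ := fun j => ∑ i ∈ I, c i (σ i j) with hA
    obtain ⟨τ, hτ⟩ := balance_step hl A (c a) hσ (hc a (mem_insert_self a I))
    refine ⟨fun i => if i = a then τ else σ i, fun j j' => ?_⟩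
    rw [Finset.sum_insert ha, Finset.sum_insert ha]
    have hrw : ∀ j₀, (∑ i ∈ I, c i ((if i = a then τ else σ i) j₀)) = A j₀ := by
      intro j₀
      refine Finset.sum_congr rfl (fun i hi => ?_)
      have : i ≠ a := fun h => ha (h ▸ hi)
      simp [this]
    simp only [if_pos rfl, if_true, hrw]
    have := hτ j j'
    omega

/-- Lift a walk staying in a closed set to the induced subgraph. -/
lemma walk_lift {V : Type*} (G : SimpleGraph V) (s : Set V)
    (hcl : ∀ x ∈ s, ∀ y, G.Adj x y → y ∈ s) {a b : V} (p : G.Walk a b) (ha : a ∈ s) :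
    ∃ hb : b ∈ s, (SimpleGraph.induce s G).Reachable ⟨a, ha⟩ ⟨b, hb⟩ := by
  induction p with
  | nil => exact ⟨ha, SimpleGraph.Reachable.refl _⟩
  | @cons u v w h p ih =>
    have hv : v ∈ s := hcl u ha v h
    obtain ⟨hb, hr⟩ := ih hv
    exact ⟨hb, SimpleGraph.Reachable.trans
      (SimpleGraph.Adj.reachable (by simpa using h)) hr⟩

lemma master {n ℓ k : ℕ} (hl : 3 ≤ ℓ) (hn : n = ℓ * k) (hk : 0 < k)
    (G : SimpleGraph (Fin n))
    (hdeg : ∀ v, (G.neighborSet v).ncard ≤ ℓ)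
    (hK : ∀ s : Set (Fin n), (∀ x ∈ s, ∀ y, G.Adj x y → y ∈ s) →
          ¬ Nonempty ((SimpleGraph.induce s G) ≃g (⊤ : SimpleGraph (Fin (ℓ+1)))))
    (hB : ∀ s : Set (Fin n), (∀ x ∈ s, ∀ y, G.Adj x y → y ∈ s) →
          ¬ Nonempty ((SimpleGraph.induce s G) ≃g completeBipartiteGraph (Fin ℓ) (Fin ℓ)))
    (hEDCC : EDCC) :
    ∃ g : Fin n → Fin ℓ, (∀ u v, G.Adj u v → g u ≠ g v) ∧
      ∀ j, (univ.filter fun v => g v = j).card = k := by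
  classical
  set comp : Fin n → Finset (Fin n) := fun v => univ.filter (fun w => G.Reachable v w)
    with hcompdef
  have hmemcomp : ∀ v w, w ∈ comp v ↔ G.Reachable v w := by
    intro v w; simp [hcompdef]
  have hself : ∀ v, v ∈ comp v := fun v => (hmemcomp v v).mpr (SimpleGraph.Reachable.refl v)
  have hcompeq : ∀ v w, w ∈ comp v → comp w = comp v := by
    intro v w hw
    ext x
    rw [hmemcomp, hmemcomp]
    have hr := (hmemcomp v w).mp hw
    exact ⟨fun h => hr.trans h, fun h => hr.symm.trans h⟩
  have hadjmem : ∀ v w, G.Adj v w → w ∈ comp v := by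
    intro v w h; exact (hmemcomp v w).mpr h.reachable
  have hclosed : ∀ v, ∀ x ∈ (↑(comp v) : Set (Fin n)), ∀ y, G.Adj x y → y ∈ (↑(comp v) : Set (Fin n)) := by
    intro v x hx y hxy
    have : x ∈ comp v := hx
    have hr := (hmemcomp v x).mp this
    exact Finset.mem_coe.mpr ((hmemcomp v y).mpr (hr.trans hxy.reachable))
  set comps : Finset (Finset (Fin n)) := univ.image comp with hcompsdef
  -- per-component colorings
  have percomp : ∀ s : Finset (Fin n), ∃ f : Fin n → Fin ℓ,
      s ∈ comps → (∀ u ∈ s, ∀ v ∈ s, G.Adj u v → f u ≠ f v) ∧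
        (∀ j j', (s.filter (fun x => f x = j)).card ≤ (s.filter (fun x => f x = j')).card + 1) := by
    intro s
    by_cases hs : s ∈ comps
    swap
    · exact ⟨fun _ => ⟨0, by omega⟩, fun h => absurd h hs⟩
    obtain ⟨v, -, hv⟩ := Finset.mem_image.mp hs
    subst hv
    set t : Set (Fin n) := ↑(comp v) with ht
    have hclt := hclosed v
    -- connectivity
    have hconn : (SimpleGraph.induce t G).Connected := by
      rw [SimpleGraph.connected_iff]
      refine ⟨?_, ⟨⟨v, hself v⟩⟩⟩
      · intro a b
        have hra : G.Reachable v ↑a := (hmemcomp v ↑a).mp a.2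
        have hrb : G.Reachable v ↑b := (hmemcomp v ↑b).mp b.2
        obtain ⟨p⟩ := (hra.symm.trans hrb)
        obtain ⟨hb, hr⟩ := walk_lift G t hclt p a.2
        have : (⟨↑b, hb⟩ : ↥t) = b := Subtype.ext rfl
        exact this ▸ hr
    -- degree bound
    have hdegt : ∀ x : ↥t, ((SimpleGraph.induce t G).neighborSet x).ncard ≤ ℓ := by
      intro x
      have himg : (Subtype.val '' ((SimpleGraph.induce t G).neighborSet x)) ⊆
          G.neighborSet ↑x := by
        rintro y ⟨z, hz, rfl⟩
        exact (by simpa using hz : G.Adj ↑x ↑z)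
      calc ((SimpleGraph.induce t G).neighborSet x).ncard
          = (Subtype.val '' ((SimpleGraph.induce t G).neighborSet x)).ncard :=
            (Set.ncard_image_of_injective _ Subtype.val_injective).symm
        _ ≤ (G.neighborSet ↑x).ncard := Set.ncard_le_ncard himg (Set.toFinite _)
        _ ≤ ℓ := hdeg ↑x
    -- EDCC
    have hEC : EquitablyColorable (SimpleGraph.induce t G) ℓ := by
      by_contra hnc
      rcases (hEDCC _ (SimpleGraph.induce t G) ℓ hconn hdegt).mp hnc with hc | ⟨hl2, -⟩ | ⟨-, hc⟩
      · exact hK t hclt hc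
      · omega
      · exact hB t hclt hc
    obtain ⟨f0, hf0p, hf0b⟩ := hEC
    refine ⟨fun x => if hx : x ∈ t then f0 ⟨x, hx⟩ else ⟨0, by omega⟩, fun _ => ⟨?_, ?_⟩⟩
    · intro u hu v hv huv
      have hu' : u ∈ t := hu
      have hv' : v ∈ t := hv
      simp only [dif_pos hu', dif_pos hv']
      exact hf0p ⟨u, hu'⟩ ⟨v, hv'⟩ (by simpa using huv)
    · intro j j'
      have hcard : ∀ j₀, ((comp v).filter
          (fun x => (if hx : x ∈ t then f0 ⟨x, hx⟩ else ⟨0, by omega⟩) = j₀)).card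
          = ({x : ↥t | f0 x = j₀}).ncard := by
        intro j₀
        rw [Set.ncard_eq_toFinset_card' ({x : ↥t | f0 x = j₀})]
        rw [Set.toFinset_setOf]
        refine Finset.card_bij (fun x hx => ⟨x, by
          have := (Finset.mem_filter.mp hx).1; exact this⟩) ?_ ?_ ?_
        · intro a ha
          have h2 := (Finset.mem_filter.mp ha).2
          have h1 : a ∈ t := (Finset.mem_filter.mp ha).1
          simp only [Finset.mem_filter, Finset.mem_univ, true_and]
          rw [dif_pos h1] at h2
          exact h2
        · intro a ha b hb hab
          simpa using hab
        · intro b hb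
          refine ⟨↑b, Finset.mem_filter.mpr ⟨b.2, ?_⟩, by simp⟩
          rw [dif_pos b.2]
          simpa using (Finset.mem_filter.mp hb).2
      rw [hcard j, hcard j']
      exact hf0b j j'
  choose F hF using percomp
  set c : Finset (Fin n) → Fin ℓ → ℕ := fun s j => (s.filter (fun x => F s x = j)).card
    with hcdef
  obtain ⟨σ, hσ⟩ := rebalance (by omega : 0 < ℓ) comps c
    (fun s hs j j' => (hF s hs).2 j j')
  set g : Fin n → Fin ℓ := fun x => (σ (comp x)).symm (F (comp x) x) with hgdef
  have hcompmem : ∀ x, comp x ∈ comps := fun x => Finset.mem_image.mpr ⟨x, mem_univ x, rfl⟩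
  refine ⟨g, ?_, ?_⟩
  · intro x y hxy
    have hy : y ∈ comp x := hadjmem x y hxy
    have hcc : comp y = comp x := hcompeq x y hy
    have hFne : F (comp x) x ≠ F (comp x) y :=
      (hF (comp x) (hcompmem x)).1 x (hself x) y hy hxy
    simp only [hgdef, hcc]
    exact fun h => hFne ((σ (comp x)).symm.injective h)
  · -- fiber sizes
    have hfib : ∀ j, (univ.filter fun v => g v = j).card = ∑ s ∈ comps, c s (σ s j) := by
      intro j
      rw [Finset.card_eq_sum_card_fiberwise (f := comp) (t := comps)
        (fun x _ => hcompmem x)]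
      refine Finset.sum_congr rfl (fun s hs => ?_)
      congr 1
      ext x
      simp only [Finset.mem_filter, Finset.mem_univ, true_and, hcdef]
      constructor
      · rintro ⟨hgx, hcx⟩
        refine ⟨hcx ▸ hself x, ?_⟩
        rw [hgdef] at hgx
        simp only [hcx] at hgx ⊢
        rwa [Equiv.symm_apply_eq] at hgx
      · rintro ⟨hxs, hFx⟩
        obtain ⟨v, -, hv⟩ := Finset.mem_image.mp hs
        have hcx : comp x = s := by
          subst hv; exact hcompeq v x hxs
        refine ⟨?_, hcx⟩
        rw [hgdef]
        simp only [hcx, hFx, Equiv.symm_apply_apply]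
    have hsum : ∑ j, (univ.filter fun v => g v = j).card = ℓ * k := by
      rw [← hn]
      have := Finset.card_eq_sum_card_fiberwise (f := g) (s := (univ : Finset (Fin n)))
        (t := (univ : Finset (Fin ℓ))) (fun x _ => mem_univ _)
      simpa using this.symm
    have hbal : ∀ j j', (univ.filter fun v => g v = j).card
        ≤ (univ.filter fun v => g v = j').card + 1 := by
      intro j j'; rw [hfib j, hfib j']; exact hσ j j'
    exact balanced_eq_of_sum _ hbal hsum

/-- The conflict relation of `H` together with the blocks of the coloring `g`. -/
def Adj2 {n ℓ : ℕ} (H : SimpleGraph (Fin n)) (g : Fin n → Fin ℓ) (u v : Fin n) : Prop :=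
  u ≠ v ∧ (H.Adj u v ∨ g u = g v)

lemma Adj2.symm' {n ℓ : ℕ} {H : SimpleGraph (Fin n)} {g : Fin n → Fin ℓ} {u v : Fin n}
    (h : Adj2 H g u v) : Adj2 H g v u :=
  ⟨h.1.symm, h.2.elim (fun h' => Or.inl h'.symm) (fun h' => Or.inr h'.symm)⟩

/-- A "bad" set: a closed set of size `ℓ+1` that is complete w.r.t. `Adj2`. -/
def IsBadF {n ℓ : ℕ} (H : SimpleGraph (Fin n)) (g : Fin n → Fin ℓ) (D : Finset (Fin n)) : Prop :=
  D.card = ℓ + 1 ∧ (∀ x ∈ D, ∀ y, Adj2 H g x y → y ∈ D) ∧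
    (∀ x ∈ D, ∀ y ∈ D, x ≠ y → Adj2 H g x y)

lemma preprocess {n ℓ k : ℕ} (H : SimpleGraph (Fin n)) (hk3 : 3 ≤ k) (hkl : k ≤ ℓ)
    (hn : n = ℓ * k) (g₀ : Fin n → Fin ℓ)
    (hp₀ : ∀ u v, H.Adj u v → g₀ u ≠ g₀ v)
    (hfib₀ : ∀ j, (univ.filter fun v => g₀ v = j).card = k) :
    ∃ g : Fin n → Fin ℓ, (∀ u v, H.Adj u v → g u ≠ g v) ∧
      (∀ j, (univ.filter fun v => g v = j).card = k) ∧ ∀ D, ¬ IsBadF H g D := by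
  classical
  set bad : (Fin n → Fin ℓ) → Finset (Finset (Fin n)) :=
    fun g => univ.filter (IsBadF H g) with hbad
  have hmembad : ∀ g D, D ∈ bad g ↔ IsBadF H g D := by
    intro g D; simp [hbad]
  suffices KEY : ∀ m : ℕ, ∀ g : Fin n → Fin ℓ,
      (∀ u v, H.Adj u v → g u ≠ g v) →
      (∀ j, (univ.filter fun v => g v = j).card = k) →
      (bad g).card ≤ m →
      ∃ g' : Fin n → Fin ℓ, (∀ u v, H.Adj u v → g' u ≠ g' v) ∧
        (∀ j, (univ.filter fun v => g' v = j).card = k) ∧ ∀ D, ¬ IsBadF H g' D by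
    exact KEY (bad g₀).card g₀ hp₀ hfib₀ le_rfl
  intro m
  induction m with
  | zero =>
    intro g hp hfib hcard
    refine ⟨g, hp, hfib, fun D hD => ?_⟩
    have : D ∈ bad g := (hmembad g D).mpr hD
    have := Finset.card_pos.mpr ⟨D, this⟩
    omega
  | succ m ih =>
    intro g hp hfib hcard
    by_cases hnobad : ∀ D, ¬ IsBadF H g D
    · exact ⟨g, hp, hfib, hnobad⟩
    push_neg at hnobad
    obtain ⟨D, hD⟩ := hnobad
    obtain ⟨hDcard, hDcl, hDco⟩ := hD
    -- basic facts
    have hl3 : 3 ≤ ℓ := le_trans hk3 hkl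
    have hDn : D.card < n := by
      have h6 : ℓ + 1 < ℓ * k := by nlinarith
      omega
    obtain ⟨u, hu⟩ : D.Nonempty := Finset.card_pos.mp (by omega)
    obtain ⟨w, hw⟩ : ∃ w, w ∉ D := by
      by_contra hall
      push_neg at hall
      have : (univ : Finset (Fin n)) ⊆ D := fun x _ => hall x
      have := Finset.card_le_card this
      simp [Finset.card_univ] at this
      omega
    have huw : u ≠ w := fun h => hw (h ▸ hu)
    have factA : ∀ x ∈ D, ∀ y, g y = g x → y ∈ D := by
      intro x hx y hgy
      by_cases hyx : y = x
      · exact hyx ▸ hx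
      · exact hDcl x hx y ⟨Ne.symm hyx, Or.inr hgy.symm⟩
    have factB : ∀ x ∈ D, g x ≠ g w := by
      intro x hx hgx
      exact hw (factA x hx w hgx.symm)
    have hguw : g u ≠ g w := factB u hu
    set g' : Fin n → Fin ℓ := fun x => g (Equiv.swap u w x) with hg'
    have hg'u : g' u = g w := by simp [hg']
    have hg'w : g' w = g u := by simp [hg']
    have hg'o : ∀ x, x ≠ u → x ≠ w → g' x = g x := by
      intro x h1 h2; simp [hg', Equiv.swap_apply_of_ne_of_ne h1 h2]
    -- fibers preserved
    have hfib' : ∀ j, (univ.filter fun v => g' v = j).card = k := by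
      intro j
      rw [← hfib j]
      refine Finset.card_bij' (fun x _ => Equiv.swap u w x) (fun x _ => Equiv.swap u w x)
        ?_ ?_ ?_ ?_
      · intro a ha
        simp only [Finset.mem_filter, Finset.mem_univ, true_and] at ha ⊢
        exact ha
      · intro a ha
        simp only [Finset.mem_filter, Finset.mem_univ, true_and] at ha ⊢
        simpa [hg', Equiv.swap_apply_self] using ha
      · intro a _; simp [Equiv.swap_apply_self]
      · intro a _; simp [Equiv.swap_apply_self]
    -- properness preserved
    have haux1 : ∀ b, b ≠ u → b ≠ w → H.Adj u b → g w ≠ g b := by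
      intro b h1 h2 hadj hgb
      have hbD : b ∈ D := hDcl u hu b ⟨Ne.symm h1, Or.inl hadj⟩
      exact factB b hbD hgb.symm
    have haux2 : ∀ b, b ≠ u → b ≠ w → H.Adj w b → g u ≠ g b := by
      intro b h1 h2 hadj hgb
      have hbD : b ∈ D := factA u hu b hgb.symm
      exact hw (hDcl b hbD w ⟨h2, Or.inl hadj.symm⟩)
    have hnadjuw : ¬ H.Adj u w := by
      intro hadj
      exact hw (hDcl u hu w ⟨huw, Or.inl hadj⟩)
    have hp' : ∀ a b, H.Adj a b → g' a ≠ g' b := by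
      intro a b hadj
      by_cases hau : a = u
      · rw [hau] at hadj ⊢
        by_cases hbu : b = u
        · rw [hbu] at hadj; exact absurd hadj (H.irrefl)
        · by_cases hbw : b = w
          · rw [hbw] at hadj; exact absurd hadj hnadjuw
          · rw [hg'u, hg'o b hbu hbw]; exact haux1 b hbu hbw hadj
      · by_cases haw : a = w
        · rw [haw] at hadj ⊢
          by_cases hbu : b = u
          · rw [hbu, hg'w, hg'u]; exact hguw
          · by_cases hbw : b = w
            · rw [hbw] at hadj; exact absurd hadj (H.irrefl)
            · rw [hg'w, hg'o b hbu hbw]; exact haux2 b hbu hbw hadj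
        · by_cases hbu : b = u
          · rw [hbu] at hadj ⊢
            rw [hg'o a hau haw, hg'u]
            exact fun h => haux1 a hau haw hadj.symm h.symm
          · by_cases hbw : b = w
            · rw [hbw] at hadj ⊢
              rw [hg'o a hau haw, hg'w]
              exact fun h => haux2 a hau haw hadj.symm h.symm
            · rw [hg'o a hau haw, hg'o b hbu hbw]; exact hp a b hadj
    -- shared picked elements
    obtain ⟨t, htD, htg⟩ : ∃ t ∈ D, g t ≠ g u := by
      have hcd := hfib (g u)
      have hsd := Finset.le_card_sdiff (univ.filter fun v => g v = g u) D
      obtain ⟨t, ht⟩ := Finset.card_pos.mp (show 0 < (D \ univ.filter fun v => g v = g u).card by omega)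
      have h2 := Finset.mem_sdiff.mp ht
      refine ⟨t, h2.1, fun h => h2.2 (Finset.mem_filter.mpr ⟨mem_univ t, h⟩)⟩
    have htu : t ≠ u := fun h => htg (by rw [h])
    have htw : t ≠ w := fun h => hw (h ▸ htD)
    obtain ⟨z, hzg, hzw⟩ : ∃ z, g z = g w ∧ z ≠ w := by
      have hcd := hfib (g w)
      have hce : ((univ.filter fun v => g v = g w).erase w).card = k - 1 := by
        rw [Finset.card_erase_of_mem (show w ∈ univ.filter fun v => g v = g w from Finset.mem_filter.mpr ⟨mem_univ w, rfl⟩), hcd]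
      obtain ⟨z, hz⟩ := Finset.card_pos.mp (show 0 < ((univ.filter fun v => g v = g w).erase w).card by omega)
      have h2 := Finset.mem_erase.mp hz
      exact ⟨z, (Finset.mem_filter.mp h2.2).2, h2.1⟩
    have hzD : z ∉ D := fun h => factB z h hzg
    have hzu : z ≠ u := fun h => hzD (h ▸ hu)
    obtain ⟨x₀, hx₀g, hx₀u⟩ : ∃ x₀, g x₀ = g u ∧ x₀ ≠ u := by
      have hcd := hfib (g u)
      have hce : ((univ.filter fun v => g v = g u).erase u).card = k - 1 := by
        rw [Finset.card_erase_of_mem (show u ∈ univ.filter fun v => g v = g u from Finset.mem_filter.mpr ⟨mem_univ u, rfl⟩), hcd]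
      obtain ⟨x₀, hx₀⟩ := Finset.card_pos.mp (show 0 < ((univ.filter fun v => g v = g u).erase u).card by omega)
      have h2 := Finset.mem_erase.mp hx₀
      exact ⟨x₀, (Finset.mem_filter.mp h2.2).2, h2.1⟩
    have hx₀D : x₀ ∈ D := factA u hu x₀ hx₀g
    have hx₀w : x₀ ≠ w := fun h => hw (h ▸ hx₀D)
    -- every bad set of g' is a bad set of g, different from D
    have hgood : ∀ D', IsBadF H g' D' → IsBadF H g D' ∧ D' ≠ D := by
      intro D' hD'
      obtain ⟨hc', hcl', hco'⟩ := hD'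
      -- step 1 : u ∉ D'
      have hustep : u ∉ D' := by
        intro hu'
        have hadjut : H.Adj u t := by
          rcases hDco u hu t htD (Ne.symm htu) with ⟨-, h | h⟩
          · exact h
          · exact absurd h.symm htg
        have htD' : t ∈ D' := hcl' u hu' t ⟨Ne.symm htu, Or.inl hadjut⟩
        have hzD' : z ∈ D' := by
          refine hcl' u hu' z ⟨Ne.symm hzu, Or.inr ?_⟩
          rw [hg'u, hg'o z hzu hzw, hzg]
        have htz : t ≠ z := fun h => hzD (h ▸ htD)
        rcases hco' t htD' z hzD' htz with ⟨-, hadj | heq⟩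
        · exact hzD (hDcl t htD z ⟨htz, Or.inl hadj⟩)
        · rw [hg'o t htu htw, hg'o z hzu hzw] at heq
          exact factB t htD (heq.trans hzg)
      -- step 2 : fiber of u (except u) misses D'
      have hxstep : ∀ x, g x = g u → x ≠ u → x ∉ D' := by
        intro x hgx hxu hx'
        have hxD : x ∈ D := factA u hu x hgx
        have hxw : x ≠ w := fun h => hw (h ▸ hxD)
        have hwD' : w ∈ D' := by
          refine hcl' x hx' w ⟨hxw, Or.inr ?_⟩
          rw [hg'w, hg'o x hxu hxw, hgx]
        have htx : t ≠ x := fun h => htg ((h ▸ rfl : g t = g x).trans hgx)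
        have hadjxt : H.Adj x t := by
          rcases hDco x hxD t htD (Ne.symm htx) with ⟨-, h | h⟩
          · exact h
          · exact absurd (h.symm.trans hgx) htg
        have htD' : t ∈ D' := hcl' x hx' t ⟨Ne.symm htx, Or.inl hadjxt⟩
        have hwt : w ≠ t := fun h => hw (h ▸ htD)
        rcases hco' w hwD' t htD' hwt with ⟨-, hadj | heq⟩
        · exact hw (hDcl t htD w ⟨Ne.symm hwt, Or.inl hadj.symm⟩)
        · rw [hg'w, hg'o t htu htw] at heq
          exact htg heq.symm
      -- step 3 : w ∉ D'
      have hwstep : w ∉ D' := by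
        intro hw'
        have hx₀D' : x₀ ∈ D' := by
          refine hcl' w hw' x₀ ⟨Ne.symm hx₀w, Or.inr ?_⟩
          rw [hg'w, hg'o x₀ hx₀u hx₀w, hx₀g]
        exact hxstep x₀ hx₀g hx₀u hx₀D'
      -- step 4 : fiber of w misses D'
      have hzstep : ∀ z', g z' = g w → z' ∉ D' := by
        intro z' hz'g hz''
        by_cases hz'w : z' = w
        · exact hwstep (hz'w ▸ hz'')
        · have hz'u : z' ≠ u := fun h => hguw ((h ▸ rfl : g u = g z').trans hz'g)
          have : u ∈ D' := by
            refine hcl' z' hz'' u ⟨hz'u, Or.inr ?_⟩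
            rw [hg'o z' hz'u hz'w, hg'u, hz'g]
          exact hustep this
      have hout : ∀ x ∈ D', x ≠ u ∧ x ≠ w ∧ g x ≠ g u ∧ g x ≠ g w := by
        intro x hx
        have h1 : x ≠ u := fun h => hustep (h ▸ hx)
        have h2 : x ≠ w := fun h => hwstep (h ▸ hx)
        exact ⟨h1, h2, fun h => hxstep x h h1 hx, fun h => hzstep x h hx⟩
      refine ⟨⟨hc', ?_, ?_⟩, fun h => hustep (h ▸ hu)⟩
      · -- closed for g
        intro x hx y hxy
        obtain ⟨hox1, hox2, hox3, hox4⟩ := hout x hx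
        rcases hxy with ⟨hne, hHa | hge⟩
        · by_cases hyu : y = u
          · exact absurd (hcl' x hx y ⟨hne, Or.inl hHa⟩) (hyu ▸ hustep)
          · by_cases hyw : y = w
            · exact absurd (hcl' x hx y ⟨hne, Or.inl hHa⟩) (hyw ▸ hwstep)
            · exact hcl' x hx y ⟨hne, Or.inl hHa⟩
        · have hyu : y ≠ u := fun h => hox3 (hge.trans (h ▸ rfl))
          have hyw : y ≠ w := fun h => hox4 (hge.trans (h ▸ rfl))
          refine hcl' x hx y ⟨hne, Or.inr ?_⟩
          rw [hg'o x hox1 hox2, hg'o y hyu hyw]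
          exact hge
      · -- complete for g
        intro x hx y hy hne
        obtain ⟨hox1, hox2, -, -⟩ := hout x hx
        obtain ⟨hoy1, hoy2, -, -⟩ := hout y hy
        rcases hco' x hx y hy hne with ⟨-, hadj | heq⟩
        · exact ⟨hne, Or.inl hadj⟩
        · rw [hg'o x hox1 hox2, hg'o y hoy1 hoy2] at heq
          exact ⟨hne, Or.inr heq⟩
    -- measure decreases
    have hDbad : D ∈ bad g := (hmembad g D).mpr ⟨hDcard, hDcl, hDco⟩
    have hsub : bad g' ⊆ (bad g).erase D := by
      intro D' hD'
      obtain ⟨hb, hne⟩ := hgood D' ((hmembad g' D').mp hD')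
      exact Finset.mem_erase.mpr ⟨hne, (hmembad g D').mpr hb⟩
    have hle : (bad g').card ≤ m := by
      have h1 := Finset.card_le_card hsub
      have h2 := Finset.card_erase_of_mem hDbad
      have h3 := Finset.card_pos.mpr ⟨D, hDbad⟩
      omega
    exact ih g' hp' hfib' hle

/-- From an iso of an induced subgraph with `K_{m+1}` we get a vertex of degree `≥ m`. -/
lemma big_degree_of_iso_top {n m : ℕ} (G : SimpleGraph (Fin n)) (s : Set (Fin n))
    (e : (SimpleGraph.induce s G) ≃g (⊤ : SimpleGraph (Fin (m+1)))) :
    ∃ v : Fin n, m ≤ (G.neighborSet v).ncard := by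
  classical
  set v : Fin n := ↑(e.symm 0) with hv
  set T : Finset (Fin n) :=
    (univ.filter (fun i : Fin (m+1) => i ≠ 0)).image (fun i => ↑(e.symm i)) with hT
  have hinj : Function.Injective (fun i : Fin (m+1) => (↑(e.symm i) : Fin n)) :=
    fun i₁ i₂ h => e.symm.injective (Subtype.val_injective h)
  have hTcard : T.card = m := by
    rw [hT, Finset.card_image_of_injective _ hinj, Finset.filter_ne', Finset.card_erase_of_mem
      (mem_univ _), Finset.card_univ, Fintype.card_fin]
    omega
  have hsub : (↑T : Set (Fin n)) ⊆ G.neighborSet v := by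
    intro y hy
    obtain ⟨i, hi, rfl⟩ := Finset.mem_image.mp hy
    have hine : i ≠ 0 := (Finset.mem_filter.mp hi).2
    have hadj : (SimpleGraph.induce s G).Adj (e.symm 0) (e.symm i) :=
      e.symm.map_adj_iff.mpr (by simp [hine.symm])
    exact (by simpa using hadj : G.Adj v _)
  refine ⟨v, ?_⟩
  calc m = (↑T : Set (Fin n)).ncard := by rw [Set.ncard_coe_finset, hTcard]
    _ ≤ (G.neighborSet v).ncard := Set.ncard_le_ncard hsub (Set.toFinite _)

/-- From an iso of an induced subgraph with `K_{m,m}`, `m>0`, we get a vertex of degree `≥ m`. -/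
lemma big_degree_of_iso_bip {n m : ℕ} (hm : 0 < m) (G : SimpleGraph (Fin n)) (s : Set (Fin n))
    (e : (SimpleGraph.induce s G) ≃g completeBipartiteGraph (Fin m) (Fin m)) :
    ∃ v : Fin n, m ≤ (G.neighborSet v).ncard := by
  classical
  set v : Fin n := ↑(e.symm (Sum.inl ⟨0, hm⟩)) with hv
  set T : Finset (Fin n) :=
    (univ : Finset (Fin m)).image (fun i => ↑(e.symm (Sum.inr i))) with hT
  have hinj : Function.Injective (fun i : Fin m => (↑(e.symm (Sum.inr i)) : Fin n)) :=
    fun i₁ i₂ h => Sum.inr_injective (e.symm.injective (Subtype.val_injective h))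
  have hTcard : T.card = m := by
    rw [hT, Finset.card_image_of_injective _ hinj, Finset.card_univ, Fintype.card_fin]
  have hsub : (↑T : Set (Fin n)) ⊆ G.neighborSet v := by
    intro y hy
    obtain ⟨i, -, rfl⟩ := Finset.mem_image.mp hy
    have hadj : (SimpleGraph.induce s G).Adj (e.symm (Sum.inl ⟨0, hm⟩)) (e.symm (Sum.inr i)) :=
      e.symm.map_adj_iff.mpr (by simp [completeBipartiteGraph_adj])
    exact (by simpa using hadj : G.Adj v _)
  refine ⟨v, ?_⟩
  calc m = (↑T : Set (Fin n)).ncard := by rw [Set.ncard_coe_finset, hTcard]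
    _ ≤ (G.neighborSet v).ncard := Set.ncard_le_ncard hsub (Set.toFinite _)

/-- `K_{m,m}` has no triangles, so neither does a graph isomorphic to it. -/
lemma no_triangle_of_iso_bip {n m : ℕ} (G : SimpleGraph (Fin n)) (s : Set (Fin n))
    (e : (SimpleGraph.induce s G) ≃g completeBipartiteGraph (Fin m) (Fin m))
    {x y z : Fin n} (hx : x ∈ s) (hy : y ∈ s) (hz : z ∈ s)
    (hxy : G.Adj x y) (hxz : G.Adj x z) (hyz : G.Adj y z) : False := by
  have hXY := e.map_adj_iff.mpr (show (SimpleGraph.induce s G).Adj ⟨x, hx⟩ ⟨y, hy⟩ by simpa)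
  have hXZ := e.map_adj_iff.mpr (show (SimpleGraph.induce s G).Adj ⟨x, hx⟩ ⟨z, hz⟩ by simpa)
  have hYZ := e.map_adj_iff.mpr (show (SimpleGraph.induce s G).Adj ⟨y, hy⟩ ⟨z, hz⟩ by simpa)
  revert hXY hXZ hYZ
  generalize (e ⟨x, hx⟩) = X
  generalize (e ⟨y, hy⟩) = Y
  generalize (e ⟨z, hz⟩) = Z
  intro hXY hXZ hYZ
  cases X <;> cases Y <;> cases Z <;> simp [completeBipartiteGraph_adj] at hXY hXZ hYZ

/-- Build a `Finpartition` of `univ` from a coloring with all fibers of size `k`. -/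
lemma partition_of_coloring {n ℓ k : ℕ} (hk : 0 < k) (g : Fin n → Fin ℓ)
    (hfib : ∀ j, ((univ : Finset (Fin n)).filter fun v => g v = j).card = k) :
    ∃ P : Finpartition (Finset.univ : Finset (Fin n)),
      IsKkFactor k P ∧ ∀ u v, SameBlock P u v ↔ g u = g v := by
  classical
  set parts : Finset (Finset (Fin n)) :=
    (univ : Finset (Fin ℓ)).image (fun j => univ.filter fun v => g v = j) with hparts
  have hmem : ∀ b, b ∈ parts ↔ ∃ j, b = univ.filter fun v => g v = j := by
    intro b; simp [hparts, eq_comm]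
  refine ⟨⟨parts, ?_, ?_, ?_⟩, ?_, ?_⟩
  · rw [Finset.supIndep_iff_pairwiseDisjoint]
    intro a ha b hb hab
    obtain ⟨j, rfl⟩ := (hmem a).mp ha
    obtain ⟨j', rfl⟩ := (hmem b).mp hb
    show Disjoint _ _
    rw [Finset.disjoint_left]
    intro x hxa hxb
    have h1 := (Finset.mem_filter.mp hxa).2
    have h2 := (Finset.mem_filter.mp hxb).2
    exact hab (by rw [← h1, ← h2])
  · apply Finset.Subset.antisymm
    · intro x hx
      obtain ⟨b, hb, hxb⟩ := Finset.mem_sup.mp hx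
      exact mem_univ x
    · intro x _
      exact Finset.mem_sup.mpr ⟨univ.filter fun v => g v = g x,
        (hmem _).mpr ⟨g x, rfl⟩, Finset.mem_filter.mpr ⟨mem_univ x, rfl⟩⟩
  · intro hbot
    obtain ⟨j, hj⟩ := (hmem ⊥).mp hbot
    have := hfib j
    rw [← hj] at this
    simp at this
    omega
  · intro b hb
    obtain ⟨j, rfl⟩ := (hmem b).mp hb
    exact hfib j
  · intro u v
    constructor
    · rintro ⟨b, hb, hub, hvb⟩
      obtain ⟨j, rfl⟩ := (hmem b).mp hb
      rw [(Finset.mem_filter.mp hub).2, (Finset.mem_filter.mp hvb).2]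
    · intro huv
      exact ⟨univ.filter fun v => g v = g u, (hmem _).mpr ⟨g u, rfl⟩,
        Finset.mem_filter.mpr ⟨mem_univ u, rfl⟩, Finset.mem_filter.mpr ⟨mem_univ v, huv.symm⟩⟩

/-- Assuming EΔCC: for `n > k(k−1)`, every family of `⌊n/(k(k−1))⌋ − 1`
pairwise edge-disjoint `K_k`-factors of `K_n` can be extended by two further
rounds; in particular, choosing round `⌊n/(k(k−1))⌋` carefully, there is
always a tournament with `⌊n/(k(k−1))⌋ + 1` rounds. -/
theorem two_more_rounds_of_EDCC (hEDCC : EDCC)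
    (k n : ℕ) (hk : 3 ≤ k) (hn : 0 < n) (hkn : k ∣ n) (hbig : k * (k - 1) < n)
    (F : Fin (n / (k * (k - 1)) - 1) → Finpartition (Finset.univ : Finset (Fin n)))
    (hF : ∀ i, IsKkFactor k (F i))
    (hdisj : ∀ i j, i ≠ j → RoundsEdgeDisjoint (F i) (F j)) :
    ∃ P P' : Finpartition (Finset.univ : Finset (Fin n)),
      IsKkFactor k P ∧ IsKkFactor k P' ∧
      (∀ i, RoundsEdgeDisjoint P (F i)) ∧
      (∀ i, RoundsEdgeDisjoint P' (F i)) ∧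
      RoundsEdgeDisjoint P P' := by
  classical
  set ℓ : ℕ := n / k with hldef
  have hk0 : 0 < k := by omega
  have hkk0 : 0 < k * (k - 1) := Nat.mul_pos hk0 (by omega)
  have hnlk : n = ℓ * k := (Nat.div_mul_cancel hkn).symm
  have hlk : k ≤ ℓ := by
    by_contra h
    push_neg at h
    have h1 : n ≤ (k - 1) * k := by
      rw [hnlk]; exact Nat.mul_le_mul_right k (by omega)
    have h2 : (k - 1) * k = k * (k - 1) := Nat.mul_comm _ _
    omega
  have hl3 : 3 ≤ ℓ := le_trans hk hlk
  have hR1 : 1 ≤ n / (k * (k - 1)) := (Nat.one_le_div_iff hkk0).mpr (le_of_lt hbig)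
  have hkey : (n / (k * (k - 1)) - 1 + 1) * (k - 1) ≤ ℓ := by
    have h1 : n / (k * (k - 1)) - 1 + 1 = n / (k * (k - 1)) := by omega
    rw [h1, hldef, Nat.le_div_iff_mul_le hk0]
    calc n / (k * (k - 1)) * (k - 1) * k = n / (k * (k - 1)) * (k * (k - 1)) := by ring
      _ ≤ n := Nat.div_mul_le_self n (k * (k - 1))
  have hkeysplit : (n / (k * (k - 1)) - 1) * (k - 1) + (k - 1) ≤ ℓ := by
    have : (n / (k * (k - 1)) - 1 + 1) * (k - 1) = (n / (k * (k - 1)) - 1) * (k - 1) + (k - 1) := by ring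
    omega
  -- the conflict graph of the given rounds
  set H : SimpleGraph (Fin n) :=
    { Adj := fun u v => u ≠ v ∧ ∃ i, SameBlock (F i) u v,
      symm := ⟨by
        rintro u v ⟨hne, i, b, hb, hu, hv⟩
        exact ⟨hne.symm, i, b, hb, hv, hu⟩⟩,
      loopless := ⟨fun v h => h.1 rfl⟩ } with hHdef
  have hHadj : ∀ u v, H.Adj u v ↔ u ≠ v ∧ ∃ i, SameBlock (F i) u v := fun u v => Iff.rfl
  -- degree bound
  have hNfin : ∀ v : Fin n, ∃ N : Finset (Fin n),
      (H.neighborSet v ⊆ ↑N) ∧ N.card ≤ (n / (k * (k - 1)) - 1) * (k - 1) := by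
    intro v
    have hbl : ∀ i : Fin (n / (k * (k - 1)) - 1), ∃ b ∈ (F i).parts, v ∈ b := fun i =>
      (F i).exists_mem (mem_univ v)
    choose bi hbi1 hbi2 using hbl
    refine ⟨univ.biUnion (fun i => (bi i).erase v), ?_, ?_⟩
    · intro y hy
      obtain ⟨hne, i, b, hb, hvb, hyb⟩ := hy
      have hbeq : b = bi i := (F i).eq_of_mem_parts hb (hbi1 i) hvb (hbi2 i)
      exact Finset.mem_coe.mpr (Finset.mem_biUnion.mpr
        ⟨i, mem_univ i, Finset.mem_erase.mpr ⟨fun h => hne h.symm, hbeq ▸ hyb⟩⟩)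
    · calc (univ.biUnion (fun i => (bi i).erase v)).card
          ≤ ∑ i, ((bi i).erase v).card := Finset.card_biUnion_le
        _ ≤ ∑ _i : Fin (n / (k * (k - 1)) - 1), (k - 1) := Finset.sum_le_sum (fun i _ => by
            rw [Finset.card_erase_of_mem (hbi2 i), hF i (bi i) (hbi1 i)])
        _ = (n / (k * (k - 1)) - 1) * (k - 1) := by simp [Finset.sum_const, Finset.card_univ, mul_comm]
  have hdegH : ∀ v, (H.neighborSet v).ncard ≤ (n / (k * (k - 1)) - 1) * (k - 1) := by
    intro v
    obtain ⟨N, hsub, hcard⟩ := hNfin v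
    calc (H.neighborSet v).ncard ≤ (↑N : Set (Fin n)).ncard :=
          Set.ncard_le_ncard hsub (Set.toFinite _)
      _ = N.card := Set.ncard_coe_finset N
      _ ≤ (n / (k * (k - 1)) - 1) * (k - 1) := hcard
  -- round 1
  obtain ⟨g₁, hg₁p, hg₁f⟩ := master hl3 hnlk hk0 H
    (fun v => le_trans (hdegH v) (by omega))
    (fun s _ hne => by
      obtain ⟨e⟩ := hne
      obtain ⟨v, hv⟩ := big_degree_of_iso_top H s e
      have := hdegH v
      omega)
    (fun s _ hne => by
      obtain ⟨e⟩ := hne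
      obtain ⟨v, hv⟩ := big_degree_of_iso_bip (by omega) H s e
      have := hdegH v
      omega)
    hEDCC
  -- fix up the coloring so that no bad sets remain
  obtain ⟨gh, hgp, hgf, hnobad⟩ := preprocess H hk hlk hnlk g₁ hg₁p hg₁f
  -- the second-round conflict graph
  set H2 : SimpleGraph (Fin n) :=
    { Adj := Adj2 H gh,
      symm := ⟨fun _ _ h => h.symm'⟩,
      loopless := ⟨fun v h => h.1 rfl⟩ } with hH2def
  have hdegH2 : ∀ v, (H2.neighborSet v).ncard ≤ ℓ := by
    intro v
    obtain ⟨N, hsub, hcard⟩ := hNfin v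
    have hsub2 : H2.neighborSet v ⊆
        ↑(N ∪ (univ.filter fun x => gh x = gh v).erase v) := by
      intro y hy
      obtain ⟨hne, hH | hg⟩ := hy
      · exact Finset.mem_coe.mpr (Finset.mem_union_left _
          (Finset.mem_coe.mp (hsub hH)))
      · refine Finset.mem_coe.mpr (Finset.mem_union_right _
          (Finset.mem_erase.mpr ⟨fun h => hne h.symm, ?_⟩))
        exact Finset.mem_filter.mpr ⟨mem_univ y, hg.symm⟩
    have hcard2 : ((univ.filter fun x => gh x = gh v).erase v).card = k - 1 := by
      rw [Finset.card_erase_of_mem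
        (show v ∈ univ.filter fun x => gh x = gh v from
          Finset.mem_filter.mpr ⟨mem_univ v, rfl⟩), hgf (gh v)]
    calc (H2.neighborSet v).ncard
        ≤ (↑(N ∪ (univ.filter fun x => gh x = gh v).erase v) : Set (Fin n)).ncard :=
          Set.ncard_le_ncard hsub2 (Set.toFinite _)
      _ = (N ∪ (univ.filter fun x => gh x = gh v).erase v).card := Set.ncard_coe_finset _
      _ ≤ N.card + ((univ.filter fun x => gh x = gh v).erase v).card :=
          Finset.card_union_le _ _
      _ ≤ ℓ := by omega
  -- round 2
  obtain ⟨g₂, hg₂p, hg₂f⟩ := master hl3 hnlk hk0 H2 hdegH2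
    (fun s hcl hne => by
      obtain ⟨e⟩ := hne
      refine hnobad ((Set.toFinite s).toFinset) ⟨?_, ?_, ?_⟩
      · rw [← Set.ncard_eq_toFinset_card s (Set.toFinite s),
          ← Nat.card_coe_set_eq, Nat.card_congr e.toEquiv,
          Nat.card_eq_fintype_card, Fintype.card_fin]
      · intro x hx y hxy
        rw [Set.Finite.mem_toFinset] at hx ⊢
        exact hcl x hx y hxy
      · intro x hx y hy hne'
        rw [Set.Finite.mem_toFinset] at hx hy
        have hxyne : (⟨x, hx⟩ : ↥s) ≠ ⟨y, hy⟩ := fun h => hne' (Subtype.mk_eq_mk.mp h)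
        have htop : (⊤ : SimpleGraph (Fin (ℓ+1))).Adj (e ⟨x, hx⟩) (e ⟨y, hy⟩) := by
          rw [SimpleGraph.top_adj]
          exact fun h => hxyne (e.injective h)
        have := e.map_adj_iff.mp htop
        exact (by simpa using this : H2.Adj x y))
    (fun s hcl hne => by
      obtain ⟨e⟩ := hne
      have hv : (↑(e.symm (Sum.inl ⟨0, by omega⟩)) : Fin n) ∈ s :=
        (e.symm (Sum.inl ⟨0, by omega⟩)).2
      set v : Fin n := ↑(e.symm (Sum.inl ⟨0, by omega⟩)) with hvdef
      set fib : Finset (Fin n) := univ.filter fun x => gh x = gh v with hfibdef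
      have hfibc : fib.card = k := hgf (gh v)
      obtain ⟨x, hx, y, hy, hxy⟩ := Finset.one_lt_card.mp
        (show 1 < fib.card by omega)
      obtain ⟨z, hz⟩ := Finset.card_pos.mp
        (show 0 < ((fib.erase x).erase y).card by
          rw [Finset.card_erase_of_mem (Finset.mem_erase.mpr ⟨hxy.symm, hy⟩),
            Finset.card_erase_of_mem hx, hfibc]
          omega)
      have hzy : z ≠ y := (Finset.mem_erase.mp hz).1
      have hzx : z ≠ x := (Finset.mem_erase.mp (Finset.mem_erase.mp hz).2).1
      have hzf : z ∈ fib := (Finset.mem_erase.mp (Finset.mem_erase.mp hz).2).2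
      have hmem : ∀ p ∈ fib, p ∈ s := by
        intro p hp
        by_cases hpv : p = v
        · exact hpv ▸ hv
        · refine hcl v hv p ⟨fun h => hpv h.symm, Or.inr ?_⟩
          exact ((Finset.mem_filter.mp hp).2).symm
      have hadj : ∀ p ∈ fib, ∀ q ∈ fib, p ≠ q → H2.Adj p q := by
        intro p hp q hq hpq
        exact ⟨hpq, Or.inr (((Finset.mem_filter.mp hp).2).trans
          ((Finset.mem_filter.mp hq).2).symm)⟩
      exact no_triangle_of_iso_bip H2 s e (hmem x hx) (hmem y hy) (hmem z hzf)
        (hadj x hx y hy hxy) (hadj x hx z hzf (Ne.symm hzx)) (hadj y hy z hzf (Ne.symm hzy)))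
    hEDCC
  -- build the two partitions
  obtain ⟨P, hPk, hPsb⟩ := partition_of_coloring hk0 gh hgf
  obtain ⟨P', hP'k, hP'sb⟩ := partition_of_coloring hk0 g₂ hg₂f
  refine ⟨P, P', hPk, hP'k, ?_, ?_, ?_⟩
  · intro i u v hne hsb hFi
    exact hgp u v ⟨hne, ⟨i, hFi⟩⟩ ((hPsb u v).mp hsb)
  · intro i u v hne hsb hFi
    exact hg₂p u v ⟨hne, Or.inl ⟨hne, ⟨i, hFi⟩⟩⟩ ((hP'sb u v).mp hsb)
  · intro u v hne hsb hsb'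
    exact hg₂p u v ⟨hne, Or.inr ((hPsb u v).mp hsb)⟩ ((hP'sb u v).mp hsb')
end

section
/- Assume the uniform case of El-Zahar's conjecture holds. Let k ≥ 3 be an odd integer and let n be a positive integer divisible by k. If F_1, …, F_r are pairwise edge-disjoint C_k-factors of the complete graph K_n with r ≤ ⌊(n+2)/4 − n/(4k)⌋ − 1, then the feasibility graph contains a C_k-factor, i.e., the tournament can be extended. (Consequently, for k odd the greedy algorithm completes at least ⌊(n+2)/4 − n/(4k)⌋ rounds.) -/
/-- A `C_k`-factor of the complete graph on `V`: a simple graph in which every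
vertex has exactly two neighbors and every connected component has exactly `k`
vertices, i.e. a vertex-disjoint union of cycles of length `k` covering all
vertices. -/
def IsCkFactor {V : Type} (k : ℕ) (F : SimpleGraph V) : Prop :=
  (∀ v : V, (F.neighborSet v).ncard = 2) ∧
  ∀ c : F.ConnectedComponent, c.supp.ncard = k

/-- The uniform case of El-Zahar's conjecture: for all `k ≥ 3` and `l ≥ 1`,
every graph on `l·k` vertices with minimum degree at least `l·⌈k/2⌉` contains
a `C_k`-factor. -/
def ElZaharUniform : Prop :=
  ∀ k l : ℕ, 3 ≤ k → 1 ≤ l →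
    ∀ G : SimpleGraph (Fin (l * k)),
      (∀ v, l * ((k + 1) / 2) ≤ (G.neighborSet v).ncard) →
      ∃ N : SimpleGraph (Fin (l * k)), N ≤ G ∧ IsCkFactor k N

lemma ncard_eq_of_equiv {α β : Type} {A : Set α} {B : Set β} (e : A ≃ B) :
    A.ncard = B.ncard := by
  rw [← Nat.card_coe_set_eq, ← Nat.card_coe_set_eq]
  exact Nat.card_congr e

lemma IsCkFactor.of_iso {V W : Type} {k : ℕ} {F : SimpleGraph V} {F' : SimpleGraph W}
    (φ : F ≃g F') (h : IsCkFactor k F) : IsCkFactor k F' := by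
  refine ⟨fun w => ?_, fun c => ?_⟩
  · rw [ncard_eq_of_equiv (φ.symm.mapNeighborSet w)]
    exact h.1 _
  · rw [ncard_eq_of_equiv (SimpleGraph.ConnectedComponent.isoEquivSupp φ.symm c)]
    exact h.2 _

lemma ncard_biUnion_le {ι α : Type} [Finite α] (s : ι → Set α) (t : Finset ι) :
    (⋃ i ∈ t, s i).ncard ≤ ∑ i ∈ t, (s i).ncard := by
  classical
  induction t using Finset.induction with
  | empty => simp
  | insert _ _ hx ih =>
    rename_i a t
    rw [Finset.set_biUnion_insert, Finset.sum_insert hx]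
    exact le_trans (Set.ncard_union_le _ _) (by omega)

/-- Assuming the uniform El-Zahar conjecture: for odd `k ≥ 3` and `k ∣ n`,
any family of `r ≤ ⌊(n+2)/4 − n/(4k)⌋ − 1` pairwise edge-disjoint
`C_k`-factors of `K_n` can be extended by another `C_k`-factor edge-disjoint
from all of them. -/
theorem greedy_oberwolfach_odd_elzahar (hEZ : ElZaharUniform)
    (k n : ℕ) (hk : 3 ≤ k) (hko : Odd k) (hn : 0 < n) (hkn : k ∣ n)
    (r : ℕ) (hr : (r : ℤ) ≤ ⌊((n : ℚ) + 2) / 4 - (n : ℚ) / (4 * k)⌋ - 1)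
    (F : Fin r → SimpleGraph (Fin n))
    (hF : ∀ i, IsCkFactor k (F i))
    (hdisj : ∀ i j : Fin r, i ≠ j → Disjoint (F i).edgeSet (F j).edgeSet) :
    ∃ N : SimpleGraph (Fin n), IsCkFactor k N ∧
      ∀ i, Disjoint N.edgeSet (F i).edgeSet := by
  classical
  set l : ℕ := n / k with hl
  have hk0 : (0:ℚ) < (k:ℚ) := by positivity
  have hlk : l * k = n := Nat.div_mul_cancel hkn
  have hl1 : 1 ≤ l :=
    Nat.one_le_iff_ne_zero.mpr (fun h => by rw [h, zero_mul] at hlk; omega)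
  -- arithmetic: 4r + l + 2 ≤ n
  have harith : 4 * r + l + 2 ≤ n := by
    have hq : ((n : ℚ) + 2) / 4 - (n : ℚ) / (4 * k) = ((n : ℚ) + 2 - l) / 4 := by
      have hnq : (n : ℚ) = (l : ℚ) * k := by exact_mod_cast hlk.symm
      rw [hnq]
      field_simp
    have h1 : ((r : ℚ) + 1) ≤ ((n : ℚ) + 2 - l) / 4 := by
      have h2 : ((r : ℤ) + 1 : ℤ) ≤ ⌊((n : ℚ) + 2 - l) / 4⌋ := by
        rw [← hq]; omega
      have := Int.floor_le (((n : ℚ) + 2 - l) / 4)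
      have h3 : (((r:ℤ) + 1 : ℤ) : ℚ) ≤ ((n : ℚ) + 2 - l) / 4 := le_trans (by exact_mod_cast h2) this
      push_cast at h3 ⊢
      linarith
    have h4 : (4 * (r:ℚ) + l + 2 : ℚ) ≤ (n : ℚ) := by linarith
    exact_mod_cast h4
  -- the feasibility graph
  set G : SimpleGraph (Fin n) := (⊤ : SimpleGraph (Fin n)) \ (⨆ i, F i) with hG
  have hGadj : ∀ a b, G.Adj a b ↔ a ≠ b ∧ ∀ i, ¬ (F i).Adj a b := by
    intro a b
    simp [hG, SimpleGraph.sdiff_adj, SimpleGraph.iSup_adj, not_exists]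
  -- degree bound for G
  have hdeg : ∀ v : Fin n, l * ((k + 1) / 2) ≤ (G.neighborSet v).ncard := by
    intro v
    have hset : G.neighborSet v = (insert v (⋃ i ∈ (Finset.univ : Finset (Fin r)), (F i).neighborSet v))ᶜ := by
      ext w
      simp only [SimpleGraph.mem_neighborSet, hGadj, Set.mem_compl_iff, Set.mem_insert_iff,
        Set.mem_iUnion, Finset.mem_univ, not_or, not_exists, true_and]
      constructor
      · rintro ⟨hne, hi⟩
        exact ⟨fun h => hne h.symm, fun i _ => hi i⟩
      · rintro ⟨hne, hi⟩
        exact ⟨fun h => hne h.symm, fun i => hi i trivial⟩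
    have hScard : (insert v (⋃ i ∈ (Finset.univ : Finset (Fin r)), (F i).neighborSet v)).ncard ≤ 2 * r + 1 := by
      refine le_trans (Set.ncard_insert_le _ _) ?_
      have := ncard_biUnion_le (fun i => (F i).neighborSet v) (Finset.univ : Finset (Fin r))
      have hsum : ∑ i ∈ (Finset.univ : Finset (Fin r)), ((F i).neighborSet v).ncard = 2 * r := by
        have : ∀ i ∈ (Finset.univ : Finset (Fin r)), ((F i).neighborSet v).ncard = 2 :=
          fun i _ => (hF i).1 v
        rw [Finset.sum_congr rfl this]
        simp [Finset.sum_const, mul_comm]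
      omega
    have hcompl : (insert v (⋃ i ∈ (Finset.univ : Finset (Fin r)), (F i).neighborSet v)).ncard
        + (G.neighborSet v).ncard = n := by
      rw [hset]
      have := Set.ncard_add_ncard_compl (insert v (⋃ i ∈ (Finset.univ : Finset (Fin r)), (F i).neighborSet v))
      simpa using this
    obtain ⟨m, hm⟩ := hko
    have hkm : (k + 1) / 2 = m + 1 := by omega
    rw [hkm]
    have hn' : n = l * (2 * m + 1) := by rw [← hlk, hm]
    have e1 : l * (2 * m + 1) = 2 * (l * m) + l := by ring
    have e2 : l * (m + 1) = l * m + l := by ring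
    omega
  -- transport to Fin (l * k)
  have e : Fin (l * k) ≃ Fin n := finCongr hlk
  set G' : SimpleGraph (Fin (l * k)) := G.comap e with hG'
  have φ : G' ≃g G := SimpleGraph.Iso.comap e G
  have hdeg' : ∀ v, l * ((k + 1) / 2) ≤ (G'.neighborSet v).ncard := by
    intro v
    rw [ncard_eq_of_equiv (φ.mapNeighborSet v)]
    exact hdeg _
  obtain ⟨N', hN'le, hN'f⟩ := hEZ k l hk hl1 G' hdeg'
  set N : SimpleGraph (Fin n) := N'.map e.toEmbedding with hN
  have ψ : N' ≃g N := SimpleGraph.Iso.map e N'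
  have hNle : N ≤ G := by
    rw [hN, SimpleGraph.map_le_iff_le_comap]
    exact hN'le
  refine ⟨N, hN'f.of_iso ψ, fun i => ?_⟩
  rw [Set.disjoint_left]
  intro x hx hx'
  induction x with
  | _ a b =>
    rw [SimpleGraph.mem_edgeSet] at hx hx'
    exact ((hGadj a b).mp (hNle hx)).2 i hx'
end

section
/- Let k be a positive integer with k ≡ 0 (mod 4). Then for every N there exists an integer n > N with k ∣ n together with a family of ⌊(n+2)/4⌋ pairwise edge-disjoint C_k-factors of the complete graph K_n whose feasibility graph contains no C_k-factor. In other words, there are infinitely many n for which a tournament with ⌊(n+2)/4⌋ rounds exists that cannot be extended. -/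
namespace Ober

open SimpleGraph

variable {V W : Type}

/-- Transport a graph along an equivalence of vertex types. -/
def push (e : V ≃ W) (G : SimpleGraph V) : SimpleGraph W where
  Adj a b := G.Adj (e.symm a) (e.symm b)
  symm := ⟨fun a b h => G.adj_symm h⟩
  loopless := ⟨fun a h => G.irrefl h⟩

@[simp] lemma push_adj (e : V ≃ W) (G : SimpleGraph V) (a b : W) :
    (push e G).Adj a b ↔ G.Adj (e.symm a) (e.symm b) := Iff.rfl

/-- The isomorphism from a graph to its pushforward. -/
def pushIso (e : V ≃ W) (G : SimpleGraph V) : G ≃g push e G where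
  toEquiv := e
  map_rel_iff' := by intro a b; simp [push]

lemma isCkFactor_of_iso {k : ℕ} {G : SimpleGraph V} {H : SimpleGraph W} (φ : G ≃g H)
    (h : IsCkFactor k G) : IsCkFactor k H := by
  obtain ⟨h1, h2⟩ := h
  constructor
  · intro w
    have hc := Nat.card_congr ((φ.symm).mapNeighborSet w)
    rw [Nat.card_coe_set_eq, Nat.card_coe_set_eq] at hc
    rw [hc]; exact h1 _
  · intro c
    induction c using SimpleGraph.ConnectedComponent.ind with
    | _ w =>
      have key : ∀ v : W, H.Reachable v w ↔ G.Reachable (φ.symm v) (φ.symm w) := by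
        intro v
        constructor
        · intro hr; exact hr.map φ.symm.toHom
        · intro hr
          have := hr.map φ.toHom
          simpa using this
      have e : ((H.connectedComponentMk w).supp) ≃ ((G.connectedComponentMk (φ.symm w)).supp) :=
        Equiv.subtypeEquiv φ.symm.toEquiv (by
          intro v
          simp only [SimpleGraph.ConnectedComponent.mem_supp_iff,
            SimpleGraph.ConnectedComponent.eq]
          exact key v)
      have hc := Nat.card_congr e
      rw [Nat.card_coe_set_eq, Nat.card_coe_set_eq] at hc
      rw [hc]; exact h2 _

lemma disjoint_edgeSet_iff {G H : SimpleGraph V} :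
    Disjoint G.edgeSet H.edgeSet ↔ ∀ a b, G.Adj a b → ¬ H.Adj a b := by
  rw [Set.disjoint_left]
  constructor
  · intro h a b hG hH
    exact h (G.mem_edgeSet.2 hG) (H.mem_edgeSet.2 hH)
  · intro h e he1 he2
    induction e using Sym2.ind with
    | _ a b => exact h a b (G.mem_edgeSet.1 he1) (H.mem_edgeSet.1 he2)

end Ober
namespace Ober
open SimpleGraph

/-- One round of the tournament: the bipartite 2-factor on `ZMod m × Bool`
joining `(x, false)` to `(x+s, true)` and `(x+s+mp, true)`. -/
def Gr (m mp s : ℕ) : SimpleGraph (ZMod m × Bool) where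
  Adj u v :=
    (u.2 = false ∧ v.2 = true ∧
      (v.1 - u.1 = (s : ZMod m) ∨ v.1 - u.1 = ((s + mp : ℕ) : ZMod m))) ∨
    (v.2 = false ∧ u.2 = true ∧
      (u.1 - v.1 = (s : ZMod m) ∨ u.1 - v.1 = ((s + mp : ℕ) : ZMod m)))
  symm := ⟨fun u v h => Or.symm h⟩
  loopless := ⟨fun u h => by
    rcases h with ⟨h1, h2, _⟩ | ⟨h1, h2, _⟩ <;> rw [h1] at h2 <;> exact Bool.noConfusion h2⟩

lemma Gr_adj_ft {m mp s : ℕ} {x y : ZMod m} :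
    (Gr m mp s).Adj (x, false) (y, true) ↔
      (y - x = (s : ZMod m) ∨ y - x = ((s + mp : ℕ) : ZMod m)) := by
  simp [Gr]

lemma Gr_adj_side {m mp s : ℕ} {u v : ZMod m × Bool} (h : (Gr m mp s).Adj u v) :
    u.2 ≠ v.2 := by
  rcases h with ⟨h1, h2, _⟩ | ⟨h1, h2, _⟩ <;> rw [h1, h2] <;> simp

lemma Gr_nbr_false {m mp s : ℕ} (x : ZMod m) :
    (Gr m mp s).neighborSet (x, false) =
      {(x + (s : ZMod m), true), (x + ((s + mp : ℕ) : ZMod m), true)} := by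
  ext ⟨y, b⟩
  cases b
  · simp [Gr, mem_neighborSet, Prod.ext_iff]
  · simp only [mem_neighborSet, Gr_adj_ft, Set.mem_insert_iff, Set.mem_singleton_iff,
      Prod.ext_iff, and_true, sub_eq_iff_eq_add']
  
lemma Gr_nbr_true {m mp s : ℕ} (y : ZMod m) :
    (Gr m mp s).neighborSet (y, true) =
      {(y - (s : ZMod m), false), (y - ((s + mp : ℕ) : ZMod m), false)} := by
  ext ⟨x, b⟩
  cases b
  · have : (Gr m mp s).Adj (y, true) (x, false) ↔ (Gr m mp s).Adj (x, false) (y, true) :=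
      ⟨fun h => h.symm, fun h => h.symm⟩
    simp only [mem_neighborSet, this, Gr_adj_ft, Set.mem_insert_iff, Set.mem_singleton_iff,
      Prod.ext_iff, and_true]
    constructor
    · rintro (h | h)
      · left; rw [← h]; ring
      · right; rw [← h]; ring
    · rintro (h | h)
      · left; rw [h]; ring
      · right; rw [h]; ring
  · simp [Gr, mem_neighborSet]

lemma Gr_degree {m mp s : ℕ} (hmp : 0 < mp) (hlt : mp < m) (v : ZMod m × Bool) :
    ((Gr m mp s).neighborSet v).ncard = 2 := by
  have hmpz : ((mp : ℕ) : ZMod m) ≠ 0 := by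
    rw [Ne, ZMod.natCast_eq_zero_iff]
    intro h
    exact absurd (Nat.le_of_dvd hmp h) (not_le.2 hlt)
  have hss : ((s : ℕ) : ZMod m) ≠ ((s + mp : ℕ) : ZMod m) := by
    push_cast
    intro h
    apply hmpz
    have := h.symm
    rwa [add_eq_left] at this
  obtain ⟨x, b⟩ := v
  cases b
  · rw [Gr_nbr_false]
    apply Set.ncard_pair
    simp only [Ne, Prod.ext_iff, and_true]
    intro h
    exact hss (by exact add_left_cancel h)
  · rw [Gr_nbr_true]
    apply Set.ncard_pair
    simp only [Ne, Prod.ext_iff, and_true]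
    intro h
    exact hss (sub_right_inj.1 h)

end Ober
namespace Ober
open SimpleGraph

/-- Invariant map: the class of a vertex modulo the subgroup generated by `mp`. -/
noncomputable def inv (m mp s : ℕ) (v : ZMod m × Bool) :
    ZMod m ⧸ AddSubgroup.zmultiples ((mp : ℕ) : ZMod m) :=
  if v.2 then QuotientAddGroup.mk (v.1 - (s : ZMod m)) else QuotientAddGroup.mk v.1

lemma inv_adj {m mp s : ℕ} {u v : ZMod m × Bool} (h : (Gr m mp s).Adj u v) :
    inv m mp s u = inv m mp s v := by
  have key : ∀ x y : ZMod m, (Gr m mp s).Adj (x, false) (y, true) →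
      inv m mp s (x, false) = inv m mp s (y, true) := by
    intro x y hxy
    rw [Gr_adj_ft] at hxy
    simp only [inv, if_true, if_false, Bool.false_eq_true, ite_false, ite_true]
    rw [QuotientAddGroup.eq_iff_sub_mem]
    rcases hxy with h1 | h1
    · have : x - (y - (s : ZMod m)) = 0 := by rw [← h1]; ring
      rw [this]; exact zero_mem _
    · have : x - (y - (s : ZMod m)) = -((mp : ℕ) : ZMod m) := by
        push_cast at h1 ⊢
        rw [← sub_eq_iff_eq_add] at h1
        rw [← h1]; ring
      rw [this]
      exact neg_mem (AddSubgroup.mem_zmultiples _)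
  obtain ⟨x, bx⟩ := u; obtain ⟨y, by'⟩ := v
  have hside := Gr_adj_side h
  cases bx <;> cases by'
  · simp at hside
  · exact key x y h
  · exact (key y x h.symm).symm
  · simp at hside

lemma inv_reachable {m mp s : ℕ} {u v : ZMod m × Bool} (h : (Gr m mp s).Reachable u v) :
    inv m mp s u = inv m mp s v := by
  obtain ⟨w⟩ := h
  induction w with
  | nil => rfl
  | cons hadj _ ih => exact (inv_adj hadj).trans ih

lemma reach_step {m mp s : ℕ} (x : ZMod m) :
    (Gr m mp s).Reachable (x, false) (x + ((mp : ℕ) : ZMod m), false) := by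
  have h1 : (Gr m mp s).Adj (x, false) (x + ((s + mp : ℕ) : ZMod m), true) := by
    rw [Gr_adj_ft]; right; ring
  have h2 : (Gr m mp s).Adj (x + ((mp : ℕ) : ZMod m), false)
      (x + ((s + mp : ℕ) : ZMod m), true) := by
    rw [Gr_adj_ft]; left; push_cast; ring
  exact h1.reachable.trans h2.reachable.symm

lemma reach_zmul {m mp s : ℕ} (x : ZMod m) (g : ℤ) :
    (Gr m mp s).Reachable (x, false) (x + g • ((mp : ℕ) : ZMod m), false) := by
  induction g using Int.induction_on with
  | zero =>
    have h0 : x + (0 : ℤ) • ((mp : ℕ) : ZMod m) = x := by simp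
    rw [h0]
  | succ g ih =>
    have heq : x + ((g : ℤ) + 1) • ((mp : ℕ) : ZMod m)
        = (x + (g : ℤ) • ((mp : ℕ) : ZMod m)) + ((mp : ℕ) : ZMod m) := by
      rw [add_smul, one_smul, add_assoc]
    rw [heq]
    exact ih.trans (reach_step _)
  | pred g ih =>
    have heq : (x + (-(g : ℤ) - 1) • ((mp : ℕ) : ZMod m)) + ((mp : ℕ) : ZMod m)
        = x + (-(g : ℤ)) • ((mp : ℕ) : ZMod m) := by
      rw [sub_smul, one_smul]; abel
    have hr := reach_step (m := m) (mp := mp) (s := s) (x + (-(g : ℤ) - 1) • ((mp : ℕ) : ZMod m))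
    rw [heq] at hr
    exact ih.trans hr.symm

lemma mk_eq_iff {m mp s : ℕ} (x : ZMod m) (v : ZMod m × Bool) :
    (Gr m mp s).connectedComponentMk v = (Gr m mp s).connectedComponentMk (x, false) ↔
      inv m mp s v = inv m mp s (x, false) := by
  constructor
  · intro h
    exact inv_reachable (SimpleGraph.ConnectedComponent.exact h)
  · intro h
    rw [SimpleGraph.ConnectedComponent.eq]
    obtain ⟨y, b⟩ := v
    cases b
    · simp only [inv, Bool.false_eq_true, if_false, ite_false] at h
      rw [QuotientAddGroup.eq_iff_sub_mem] at h
      obtain ⟨g, hg⟩ := AddSubgroup.mem_zmultiples_iff.1 h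
      have : y = x + g • ((mp : ℕ) : ZMod m) := by rw [hg]; ring
      rw [this]
      exact (reach_zmul x g).symm
    · simp only [inv, if_true, Bool.false_eq_true, ite_false, ite_true] at h
      rw [QuotientAddGroup.eq_iff_sub_mem] at h
      obtain ⟨g, hg⟩ := AddSubgroup.mem_zmultiples_iff.1 h
      have hy : y = (x + g • ((mp : ℕ) : ZMod m)) + (s : ZMod m) := by
        rw [hg]; ring
      have hadj : (Gr m mp s).Adj (x + g • ((mp : ℕ) : ZMod m), false) (y, true) := by
        rw [Gr_adj_ft]; left; rw [hy]; ring
      exact (((reach_zmul x g).trans hadj.reachable)).symm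

lemma comp_rep {m mp s : ℕ} (c : (Gr m mp s).ConnectedComponent) :
    ∃ x : ZMod m, c = (Gr m mp s).connectedComponentMk (x, false) := by
  induction c using SimpleGraph.ConnectedComponent.ind with
  | _ v =>
    obtain ⟨y, b⟩ := v
    cases b
    · exact ⟨y, rfl⟩
    · refine ⟨y - (s : ZMod m), ?_⟩
      rw [SimpleGraph.ConnectedComponent.eq]
      refine SimpleGraph.Adj.reachable ?_
      have : (Gr m mp s).Adj (y - (s : ZMod m), false) (y, true) := by
        rw [Gr_adj_ft]; left; ring
      exact this.symm

lemma supp_eq {m mp s : ℕ} (x : ZMod m) :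
    ((Gr m mp s).connectedComponentMk (x, false)).supp
      = inv m mp s ⁻¹' {inv m mp s (x, false)} := by
  ext v
  rw [SimpleGraph.ConnectedComponent.mem_supp_iff, mk_eq_iff]
  simp

lemma supp_ncard {m mp s : ℕ} [NeZero m] (hmp : 0 < mp) (hdvd : mp ∣ m)
    (c : (Gr m mp s).ConnectedComponent) : c.supp.ncard = 2 * (m / mp) := by
  obtain ⟨x, rfl⟩ := comp_rep c
  rw [supp_eq]
  set H := AddSubgroup.zmultiples ((mp : ℕ) : ZMod m) with hH
  have hmem : ∀ v : ZMod m × Bool,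
      v ∈ inv m mp s ⁻¹' {inv m mp s (x, false)} ↔
        (v.2 = false ∧ v.1 - x ∈ H) ∨ (v.2 = true ∧ v.1 - (s : ZMod m) - x ∈ H) := by
    rintro ⟨y, b⟩
    have h2 : inv m mp s (x, false) = QuotientAddGroup.mk x := rfl
    cases b with
    | false =>
      have h1 : inv m mp s (y, false) = QuotientAddGroup.mk y := rfl
      simp only [Set.mem_preimage, Set.mem_singleton_iff, h1, h2,
        QuotientAddGroup.eq_iff_sub_mem]
      simp [hH]
    | true =>
      have h1 : inv m mp s (y, true) = QuotientAddGroup.mk (y - (s : ZMod m)) := rfl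
      simp only [Set.mem_preimage, Set.mem_singleton_iff, h1, h2,
        QuotientAddGroup.eq_iff_sub_mem]
      simp [hH]
  -- build the bijection with H × Bool
  have hbij : ∃ f : (H × Bool) → (inv m mp s ⁻¹' {inv m mp s (x, false)} : Set _),
      Function.Bijective f := by
    refine ⟨fun p => ⟨((x + (p.1 : ZMod m) + if p.2 then (s : ZMod m) else 0), p.2), ?_⟩, ?_, ?_⟩
    · rw [hmem]
      rcases p with ⟨z, b⟩
      cases b
      · left; refine ⟨rfl, ?_⟩; simpa using z.2
      · right; refine ⟨rfl, ?_⟩; simp only [if_true, ite_true]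
        have : x + (z : ZMod m) + (s : ZMod m) - (s : ZMod m) - x = (z : ZMod m) := by ring
        rw [this]; exact z.2
    · rintro ⟨z, b⟩ ⟨z', b'⟩ hzz
      obtain ⟨h1, h2⟩ := Prod.ext_iff.1 (Subtype.ext_iff.1 hzz)
      cases b <;> cases b'
      · exact Prod.ext (Subtype.ext (add_left_cancel (add_right_cancel h1))) rfl
      · exact absurd h2 (by simp)
      · exact absurd h2 (by simp)
      · exact Prod.ext (Subtype.ext (add_left_cancel (add_right_cancel h1))) rfl
    · rintro ⟨⟨y, b⟩, hv⟩
      rw [hmem] at hv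
      rcases hv with ⟨hb, hz⟩ | ⟨hb, hz⟩
      · refine ⟨⟨⟨y - x, hz⟩, false⟩, ?_⟩
        apply Subtype.ext
        simp only [hb, Bool.false_eq_true, ite_false, if_false]
        exact Prod.ext (by push_cast; ring) hb.symm
      · refine ⟨⟨⟨y - (s : ZMod m) - x, hz⟩, true⟩, ?_⟩
        apply Subtype.ext
        simp only [if_true, ite_true]
        exact Prod.ext (by push_cast; ring) hb.symm
  obtain ⟨f, hf⟩ := hbij
  have hcard := Nat.card_congr (Equiv.ofBijective f hf)
  rw [Nat.card_coe_set_eq] at hcard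
  rw [← hcard, Nat.card_prod, Nat.card_zmultiples, ZMod.addOrderOf_coe mp (NeZero.ne m),
    Nat.gcd_eq_right hdvd, Nat.card_eq_fintype_card, Fintype.card_bool, mul_comm]

end Ober
namespace Ober
open SimpleGraph

/-- The base shift of round `i`. -/
def sh (mp i : ℕ) : ℕ := i % mp + (i / mp) * (2 * mp)

lemma sh_form (mp i e : ℕ) : sh mp i + e * mp = i % mp + ((i / mp) * 2 + e) * mp := by
  unfold sh; ring

lemma unique_rep {mp a a' t t' : ℕ} (ha : a < mp) (ha' : a' < mp)
    (h : a + t * mp = a' + t' * mp) : a = a' ∧ t = t' := by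
  have hmp : 0 < mp := lt_of_le_of_lt (Nat.zero_le a) ha
  have h1 : a % mp = a := Nat.mod_eq_of_lt ha
  have h1' : a' % mp = a' := Nat.mod_eq_of_lt ha'
  have h2 : (a + t * mp) % mp = a := by rw [Nat.add_mul_mod_self_right, h1]
  have h2' : (a' + t' * mp) % mp = a' := by rw [Nat.add_mul_mod_self_right, h1']
  have haa : a = a' := by rw [← h2, ← h2', h]
  refine ⟨haa, ?_⟩
  subst haa
  have : t * mp = t' * mp := by omega
  exact Nat.eq_of_mul_eq_mul_right hmp this

lemma rep_lt {q mp i e : ℕ} (hmp : 0 < mp) (hi : i < q * mp) (he : e ≤ 1) :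
    i % mp + ((i / mp) * 2 + e) * mp < 2 * q * mp := by
  have hq : 0 < q := by
    rcases Nat.eq_zero_or_pos q with h | h
    · subst h; simp at hi
    · exact h
  have h1 : i % mp < mp := Nat.mod_lt _ hmp
  have h2 : i / mp < q := (Nat.div_lt_iff_lt_mul hmp).2 hi
  have h3 : (i / mp) * 2 + e ≤ 2 * q - 1 := by omega
  have h4 : ((i / mp) * 2 + e) * mp ≤ (2 * q - 1) * mp := Nat.mul_le_mul_right _ h3
  have h5 : (2 * q - 1) * mp + mp = 2 * q * mp := by
    have hge : mp ≤ 2 * q * mp := Nat.le_mul_of_pos_left _ (by omega)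
    rw [Nat.sub_one_mul]
    omega
  omega

lemma cover {q mp d : ℕ} (hmp : 0 < mp) (hd : d < 2 * q * mp) :
    ∃ i < q * mp, ∃ e ≤ 1, d = i % mp + ((i / mp) * 2 + e) * mp := by
  have hq : 0 < q := by
    rcases Nat.eq_zero_or_pos q with h | h
    · subst h; simp at hd
    · exact h
  set c := d % mp with hc
  set t := d / mp with ht
  have hcmp : c < mp := Nat.mod_lt _ hmp
  have htq : t < 2 * q := by
    rw [ht]
    exact (Nat.div_lt_iff_lt_mul hmp).2 hd
  refine ⟨mp * (t / 2) + c, ?_, t % 2, Nat.le_of_lt_succ (Nat.mod_lt _ (by norm_num)), ?_⟩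
  · have hj : t / 2 < q := by omega
    have : mp * (t / 2) + c < mp * (t / 2) + mp := by omega
    calc mp * (t / 2) + c < mp * (t / 2) + mp := this
      _ = mp * (t / 2 + 1) := by ring
      _ ≤ mp * q := Nat.mul_le_mul_left _ (by omega)
      _ = q * mp := mul_comm _ _
  · have hmod : (mp * (t / 2) + c) % mp = c := by
      rw [Nat.mul_add_mod, Nat.mod_eq_of_lt hcmp]
    have hdiv : (mp * (t / 2) + c) / mp = t / 2 := by
      rw [Nat.mul_add_div hmp, Nat.div_eq_of_lt hcmp, Nat.add_zero]
    rw [hmod, hdiv]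
    have h1 : t / 2 * 2 + t % 2 = t := by omega
    rw [h1]
    have h2 : c + t * mp = d := by
      rw [hc, ht, mul_comm]
      exact Nat.mod_add_div d mp
    omega

/-- Two distinct rounds are edge-disjoint. -/
lemma Gr_disjoint {q mp : ℕ} (hmp : 0 < mp) {i j : ℕ} (hi : i < q * mp) (hj : j < q * mp)
    (hij : i ≠ j) :
    Disjoint (Gr (2 * q * mp) mp (sh mp i)).edgeSet (Gr (2 * q * mp) mp (sh mp j)).edgeSet := by
  rw [disjoint_edgeSet_iff]
  intro a b hGi hGj
  apply hij
  have hq : 0 < q := by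
    rcases Nat.eq_zero_or_pos q with h | h
    · subst h; simp at hi
    · exact h
  -- reduce to the cross-edge case
  have key : ∀ x y : ZMod (2 * q * mp),
      (Gr (2 * q * mp) mp (sh mp i)).Adj (x, false) (y, true) →
      (Gr (2 * q * mp) mp (sh mp j)).Adj (x, false) (y, true) → i = j := by
    intro x y h1 h2
    rw [Gr_adj_ft] at h1 h2
    have cast_eq : ∀ (u v : ℕ), u < 2 * q * mp → v < 2 * q * mp →
        ((u : ZMod (2 * q * mp)) = (v : ZMod (2 * q * mp))) → u = v := by
      intro u v hu hv huv
      haveI : NeZero (2 * q * mp) := ⟨Nat.mul_ne_zero (Nat.mul_ne_zero two_ne_zero (by omega)) (by omega)⟩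
      have := congrArg ZMod.val huv
      rwa [ZMod.val_cast_of_lt hu, ZMod.val_cast_of_lt hv] at this
    have forms : ∀ e ≤ 1, ∀ e' ≤ 1,
        ((sh mp i + e * mp : ℕ) : ZMod (2 * q * mp)) = ((sh mp j + e' * mp : ℕ) : ZMod (2 * q * mp))
        → i = j := by
      intro e he e' he' hcast
      rw [sh_form, sh_form] at hcast
      have := cast_eq _ _ (rep_lt hmp hi he) (rep_lt hmp hj he') hcast
      obtain ⟨hmod, hdiv⟩ := unique_rep (Nat.mod_lt _ hmp) (Nat.mod_lt _ hmp) this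
      have hdd : i / mp = j / mp := by omega
      calc i = mp * (i / mp) + i % mp := (Nat.div_add_mod i mp).symm
        _ = mp * (j / mp) + j % mp := by rw [hdd, hmod]
        _ = j := Nat.div_add_mod j mp
    rcases h1 with h1 | h1 <;> rcases h2 with h2 | h2
    · refine forms 0 (by norm_num) 0 (by norm_num) ?_
      simp only [Nat.mul_comm, zero_mul, Nat.add_zero]
      rw [← h1, ← h2]
    · refine forms 0 (by norm_num) 1 (by norm_num) ?_
      simp only [zero_mul, Nat.add_zero, one_mul]
      rw [← h1, ← h2]
    · refine forms 1 (by norm_num) 0 (by norm_num) ?_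
      simp only [zero_mul, Nat.add_zero, one_mul]
      rw [← h1, ← h2]
    · refine forms 1 (by norm_num) 1 (by norm_num) ?_
      simp only [one_mul]
      rw [← h1, ← h2]
  obtain ⟨xa, ba⟩ := a; obtain ⟨xb, bb⟩ := b
  have hside := Gr_adj_side hGi
  cases ba <;> cases bb
  · simp at hside
  · exact key xa xb hGi hGj
  · exact key xb xa hGi.symm hGj.symm
  · simp at hside

/-- Every cross pair is an edge of some round. -/
lemma Gr_cover {q mp : ℕ} (hq : 0 < q) (hmp : 0 < mp) (x y : ZMod (2 * q * mp)) :
    ∃ i < q * mp, (Gr (2 * q * mp) mp (sh mp i)).Adj (x, false) (y, true) := by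
  haveI : NeZero (2 * q * mp) := ⟨Nat.mul_ne_zero (Nat.mul_ne_zero two_ne_zero (by omega)) (by omega)⟩
  set d := (y - x).val with hd
  have hdlt : d < 2 * q * mp := ZMod.val_lt _
  obtain ⟨i, hi, e, he, hde⟩ := cover hmp hdlt
  refine ⟨i, hi, ?_⟩
  rw [Gr_adj_ft]
  have hyx : y - x = ((d : ℕ) : ZMod (2 * q * mp)) := by
    rw [hd, ZMod.natCast_val, ZMod.cast_id]
  interval_cases e
  · left
    rw [hyx, hde, ← sh_form mp i 0]
    norm_num
  · right
    rw [hyx, hde, ← sh_form mp i 1]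
    norm_num

end Ober
namespace Ober
open SimpleGraph

lemma no_extension {q mp : ℕ} (hq : 0 < q) (hmp0 : 0 < mp) (hodd : mp % 2 = 1)
    (M' : SimpleGraph (ZMod (2 * q * mp) × Bool))
    (hside : ∀ u v, M'.Adj u v → u.2 = v.2)
    (hfac : IsCkFactor (4 * q) M') : False := by
  classical
  haveI : NeZero (2 * q * mp) :=
    ⟨Nat.mul_ne_zero (Nat.mul_ne_zero two_ne_zero (by omega)) (by omega)⟩
  have hreach : ∀ u v, M'.Reachable u v → u.2 = v.2 := by
    intro u v h
    obtain ⟨w⟩ := h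
    induction w with
    | nil => rfl
    | cons h p ih => exact (hside _ _ h).trans ih
  haveI : Fintype M'.ConnectedComponent := Fintype.ofFinite _
  set A : Finset (ZMod (2 * q * mp) × Bool) :=
    Finset.univ.filter (fun v => v.2 = false) with hA
  have hcardA : A.card = 2 * q * mp := by
    have himg : A = Finset.univ.image (fun x : ZMod (2 * q * mp) => (x, false)) := by
      ext ⟨y, b⟩
      simp only [hA, Finset.mem_filter, Finset.mem_univ, true_and, Finset.mem_image,
        Prod.ext_iff]
      constructor
      · intro hb
        exact ⟨y, rfl, hb.symm⟩
      · rintro ⟨x, -, hx⟩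
        exact hx.symm
    rw [himg, Finset.card_image_of_injective _ (fun a b h => (Prod.ext_iff.1 h).1),
      Finset.card_univ, ZMod.card]
  have hsum := Finset.card_eq_sum_card_fiberwise
    (f := fun v => M'.connectedComponentMk v) (s := A) (t := Finset.univ)
    (fun x _ => Finset.mem_univ _)
  have hdvd : ∀ c ∈ (Finset.univ : Finset M'.ConnectedComponent),
      (4 * q) ∣ (A.filter (fun v => M'.connectedComponentMk v = c)).card := by
    intro c _
    by_cases hne : (A.filter (fun v => M'.connectedComponentMk v = c)).Nonempty
    · obtain ⟨v0, hv0⟩ := hne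
      simp only [hA, Finset.mem_filter, Finset.mem_univ, true_and] at hv0
      obtain ⟨hv0b, hv0c⟩ := hv0
      have hfil : A.filter (fun v => M'.connectedComponentMk v = c)
          = Finset.univ.filter (fun v => M'.connectedComponentMk v = c) := by
        ext w
        simp only [hA, Finset.mem_filter, Finset.mem_univ, true_and, and_iff_right_iff_imp]
        intro h
        have hr : M'.Reachable w v0 := by
          rw [← hv0c] at h
          exact SimpleGraph.ConnectedComponent.exact h
        rw [hreach _ _ hr, hv0b]
      have hsupp : c.supp = ↑(Finset.univ.filter (fun v => M'.connectedComponentMk v = c)) := by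
        ext w
        simp [SimpleGraph.ConnectedComponent.mem_supp_iff]
      have hcard := hfac.2 c
      rw [hsupp, Set.ncard_coe_finset] at hcard
      rw [hfil, hcard]
    · rw [Finset.not_nonempty_iff_eq_empty] at hne
      rw [hne, Finset.card_empty]
      exact dvd_zero _
  have hkdvd : (4 * q) ∣ 2 * q * mp := by
    rw [← hcardA, hsum]
    exact Finset.dvd_sum hdvd
  obtain ⟨t, ht⟩ := hkdvd
  have h2q : 0 < 2 * q := by omega
  have hmp2 : mp = 2 * t := by
    have heq : (2 * q) * mp = (2 * q) * (2 * t) := by rw [ht]; ring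
    exact Nat.eq_of_mul_eq_mul_left h2q heq
  omega

end Ober

/-- For every positive `k` with `k ≡ 0 (mod 4)` and every `N` there is
`n > N` with `k ∣ n` and a family of `⌊(n+2)/4⌋` pairwise edge-disjoint
`C_k`-factors of `K_n` such that no further `C_k`-factor is edge-disjoint
from all of them: a tournament with `⌊(n+2)/4⌋` rounds that cannot be
extended. -/
theorem oberwolfach_zero_mod_four_tight_example (k : ℕ) (hk : 0 < k)
    (hk4 : k % 4 = 0) (N : ℕ) :
    ∃ n > N, k ∣ n ∧
      ∃ F : Fin ((n + 2) / 4) → SimpleGraph (Fin n),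
        (∀ i, IsCkFactor k (F i)) ∧
        (∀ i j, i ≠ j → Disjoint (F i).edgeSet (F j).edgeSet) ∧
        ¬ ∃ M : SimpleGraph (Fin n), IsCkFactor k M ∧
            ∀ i, Disjoint M.edgeSet (F i).edgeSet := by
  classical
  open Ober in
  set q := k / 4 with hqdef
  have hk4q : k = 4 * q := by omega
  have hq : 0 < q := by omega
  set mp := 2 * N + 1 with hmpdef
  have hmp0 : 0 < mp := by omega
  have hodd : mp % 2 = 1 := by omega
  set n := k * mp with hndef
  have hn4 : n = 4 * q * mp := by rw [hndef, hk4q]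
  have hm2 : 2 * q * mp * 2 = n := by rw [hn4]; ring
  haveI : NeZero (2 * q * mp) :=
    ⟨Nat.mul_ne_zero (Nat.mul_ne_zero two_ne_zero (by omega)) (by omega)⟩
  have hr : (n + 2) / 4 = q * mp := by
    have : n = 4 * (q * mp) := by rw [hn4]; ring
    omega
  have hlt : mp < 2 * q * mp := by
    have h1 : 1 * mp < (2 * q) * mp := (Nat.mul_lt_mul_right hmp0).2 (by omega)
    rwa [one_mul] at h1
  have hdvdm : mp ∣ 2 * q * mp := ⟨2 * q, by ring⟩
  have hdivm : 2 * q * mp / mp = 2 * q := by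
    rw [Nat.mul_div_cancel _ hmp0]
  -- the equivalence with Fin n
  have hcards : Fintype.card (ZMod (2 * q * mp) × Bool) = n := by
    rw [Fintype.card_prod, ZMod.card, Fintype.card_bool, hm2]
  let e : (ZMod (2 * q * mp) × Bool) ≃ Fin n := Fintype.equivFinOfCardEq hcards
  refine ⟨n, ?_, ⟨mp, rfl⟩, ?_⟩
  · calc N < mp := by omega
      _ ≤ k * mp := Nat.le_mul_of_pos_left _ hk
  refine ⟨fun i => push e (Gr (2 * q * mp) mp (sh mp i.val)), ?_, ?_, ?_⟩
  · intro i
    apply isCkFactor_of_iso (pushIso e _)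
    constructor
    · intro v
      exact Gr_degree hmp0 hlt v
    · intro c
      rw [supp_ncard hmp0 hdvdm c, hdivm, hk4q]
      omega
  · intro i j hij
    have hij' : i.val ≠ j.val := fun h => hij (Fin.ext h)
    have hiv : i.val < q * mp := by rw [← hr]; exact i.isLt
    have hjv : j.val < q * mp := by rw [← hr]; exact j.isLt
    have hd := Gr_disjoint hmp0 hiv hjv hij'
    rw [disjoint_edgeSet_iff] at hd ⊢
    intro a b h1 h2
    exact hd _ _ h1 h2
  · rintro ⟨M, hM, hdisj⟩
    have hM' : IsCkFactor k (push e.symm M) := isCkFactor_of_iso (pushIso e.symm M) hM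
    rw [hk4q] at hM'
    apply no_extension hq hmp0 hodd (push e.symm M) ?_ hM'
    intro u v huv
    by_contra hne
    -- a cross edge of M, WLOG from false to true
    have key : ∀ x y : ZMod (2 * q * mp),
        (push e.symm M).Adj (x, false) (y, true) → False := by
      intro x y hxy
      obtain ⟨i, hi, hadj⟩ := Gr_cover hq hmp0 x y
      have hiFin : i < (n + 2) / 4 := by rw [hr]; exact hi
      have hd := hdisj ⟨i, hiFin⟩
      rw [disjoint_edgeSet_iff] at hd
      apply hd (e (x, false)) (e (y, true))
      · have : M.Adj (e.symm.symm (x, false)) (e.symm.symm (y, true)) := hxy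
        simpa using this
      · show (Gr (2 * q * mp) mp (sh mp i)).Adj (e.symm (e (x, false))) (e.symm (e (y, true)))
        simpa using hadj
    obtain ⟨xu, bu⟩ := u
    obtain ⟨xv, bv⟩ := v
    simp only at hne
    cases bu <;> cases bv
    · exact hne rfl
    · exact key xu xv huv
    · exact key xv xu huv.symm
    · exact hne rfl
end
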